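/- arXiv:1210.5363 — 9 statements merged into one kernel-verified Lean document; each statement's English description precedes it below -/
import Mathlib

section
/- Let W = (W_1, …, W_r) be a path decomposition of a finite digraph T of width at most p in which no two consecutive bags are equal. Define (A_i, B_i) = (W_1 ∪ … ∪ W_i, W_{i+1} ∪ … ∪ W_r) for 0 ≤ i ≤ r. Then the sequence ((A_0,B_0), …, (A_r,B_r)) is a separation chain of T of width at most p. -/
/-- A digraph (given by its arc relation) is semi-complete if it is simple (no loops;
multiple arcs are impossible in this encoding) and any two distinct vertices are
joined by an arc in at least one direction. -/
def SemiComplete {V : Type*} (E : V → V → Prop) : Prop :=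
  (∀ v, ¬ E v v) ∧ ∀ v w : V, v ≠ w → E v w ∨ E w v

/-- The outdegree of a vertex: the number of its outneighbours. -/
noncomputable def outdeg {V : Type*} (E : V → V → Prop) (v : V) : ℕ :=
  {w | E v w}.ncard

/-- A directed path, encoded as a nonempty list of pairwise distinct vertices in which
consecutive vertices are joined by arcs. -/
def IsDipath {V : Type*} (E : V → V → Prop) (p : List V) : Prop :=
  p ≠ [] ∧ p.Nodup ∧ p.Chain' E

/-- A directed path from `v` to `w`. -/
def PathFrom {V : Type*} (E : V → V → Prop) (v w : V) (p : List V) : Prop :=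
  IsDipath E p ∧ p.head? = some v ∧ p.getLast? = some w

/-- The length of a path (its number of arcs). -/
def pathLen {V : Type*} (p : List V) : ℕ := p.length - 1

/-- The internal vertices of a path: all vertices except the first and the last one. -/
def internals {V : Type*} (p : List V) : List V := (p.drop 1).dropLast

/-- The arcs of a path. -/
def arcsOf {V : Type*} (p : List V) : List (V × V) := p.zip (p.drop 1)

/-- A `(k,d)`-short jungle: a set `X` of at least `k` vertices such that for every ordered
pair of distinct vertices `v, w ∈ X` there are `k` pairwise distinct paths from `v` to `w`,
each of length at most `d`, that are pairwise internally vertex-disjoint. -/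
def ShortJungle {V : Type*} (E : V → V → Prop) (k d : ℕ) (X : Set V) : Prop :=
  k ≤ X.ncard ∧ ∀ v ∈ X, ∀ w ∈ X, v ≠ w →
    ∃ P : Fin k → List V, Function.Injective P ∧
      (∀ i, PathFrom E v w (P i) ∧ pathLen (P i) ≤ d) ∧
      (∀ i j, i ≠ j → ∀ z ∈ internals (P i), z ∉ internals (P j))

/-- A `(k,d)`-short immersion jungle: as a short jungle, but with the `k` paths required
to be pairwise arc-disjoint instead of internally vertex-disjoint. -/
def ShortImmersionJungle {V : Type*} (E : V → V → Prop) (k d : ℕ) (X : Set V) : Prop :=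
  k ≤ X.ncard ∧ ∀ v ∈ X, ∀ w ∈ X, v ≠ w →
    ∃ P : Fin k → List V, Function.Injective P ∧
      (∀ i, PathFrom E v w (P i) ∧ pathLen (P i) ≤ d) ∧
      (∀ i j, i ≠ j → ∀ a ∈ arcsOf (P i), a ∉ arcsOf (P j))

/-- `H` (arc relation `Eh`) is topologically contained in `G` (arc relation `Eg`):
there is an injective map `η` on vertices and, for every arc `(u,v)` of `H`, a directed
path in `G` from `η u` to `η v`, these paths being pairwise internally vertex-disjoint
with no internal vertex in the image of `η`. -/
def TopContain {W V : Type*} (Eh : W → W → Prop) (Eg : V → V → Prop) : Prop :=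
  ∃ (η : W → V) (P : W → W → List V), Function.Injective η ∧
    (∀ u v : W, Eh u v → PathFrom Eg (η u) (η v) (P u v)) ∧
    (∀ u v : W, Eh u v → ∀ z ∈ internals (P u v), z ∉ Set.range η) ∧
    (∀ u v u' v' : W, Eh u v → Eh u' v' → (u, v) ≠ (u', v') →
      ∀ z ∈ internals (P u v), z ∉ internals (P u' v'))

/-- `H` (arc relation `Eh`) is immersed in `G` (arc relation `Eg`): there is an injective
map `η` on vertices and, for every arc `(u,v)` of `H`, a directed path in `G` from `η u`
to `η v`, these paths being pairwise arc-disjoint. -/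
def Immerses {W V : Type*} (Eh : W → W → Prop) (Eg : V → V → Prop) : Prop :=
  ∃ (η : W → V) (P : W → W → List V), Function.Injective η ∧
    (∀ u v : W, Eh u v → PathFrom Eg (η u) (η v) (P u v)) ∧
    (∀ u v u' v' : W, Eh u v → Eh u' v' → (u, v) ≠ (u', v') →
      ∀ a ∈ arcsOf (P u v), a ∉ arcsOf (P u' v'))

/-- A path decomposition of the digraph with arc relation `E`, with bags `Bs 0, …, Bs (r-1)`. -/
def IsPathDecomp {V : Type*} {r : ℕ} (E : V → V → Prop) (Bs : Fin r → Set V) : Prop :=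
  (⋃ i, Bs i) = Set.univ ∧
  (∀ i j l : Fin r, i < j → j < l → Bs i ∩ Bs l ⊆ Bs j) ∧
  (∀ u v : V, E u v →
    (∃ i, u ∈ Bs i ∧ v ∈ Bs i) ∨ ∃ i j : Fin r, j < i ∧ u ∈ Bs i ∧ v ∈ Bs j)

/-- The pathwidth of a digraph: the least `p` admitting a path decomposition all of whose
bags have size at most `p + 1`. -/
noncomputable def pathwidth {V : Type*} (E : V → V → Prop) : ℕ :=
  sInf {p | ∃ (r : ℕ) (Bs : Fin r → Set V), IsPathDecomp E Bs ∧ ∀ i, (Bs i).ncard - 1 ≤ p}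

/-- A separation of a digraph: a pair `(A,B)` covering all vertices with no arc from
`A \ B` to `B \ A`. -/
def IsSeparation {V : Type*} (E : V → V → Prop) (A B : Set V) : Prop :=
  A ∪ B = Set.univ ∧ ∀ v ∈ A \ B, ∀ w ∈ B \ A, ¬ E v w

/-- A separation chain `((A 0, B 0), …, (A r, B r))`. -/
def IsSepChain {V : Type*} {r : ℕ} (E : V → V → Prop) (A B : Fin (r + 1) → Set V) : Prop :=
  A 0 = ∅ ∧ B 0 = Set.univ ∧ A (Fin.last r) = Set.univ ∧ B (Fin.last r) = ∅ ∧
  (∀ i, IsSeparation E (A i) (B i)) ∧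
  (∀ i j : Fin (r + 1), i ≤ j → A i ⊆ A j ∧ B j ⊆ B i)

/-- A `(k,ℓ)`-degree tangle: at least `k` vertices whose outdegrees pairwise differ
by at most `ℓ`. -/
def DegreeTangle {V : Type*} (E : V → V → Prop) (k ℓ : ℕ) (X : Set V) : Prop :=
  k ≤ X.ncard ∧ ∀ v ∈ X, ∀ w ∈ X, outdeg E v ≤ outdeg E w + ℓ

/-- A `(k,ℓ)`-matching tangle: disjoint sets `X`, `Y` of size `k` with a matching from `X`
to `Y`, where every vertex of `Y` has outdegree more than `ℓ` larger than every vertex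
of `X`. -/
def MatchingTangle {V : Type*} (E : V → V → Prop) (k ℓ : ℕ) (X Y : Set V) : Prop :=
  Disjoint X Y ∧ X.ncard = k ∧ Y.ncard = k ∧
  (∃ f : V → V, Set.BijOn f X Y ∧ ∀ v ∈ X, E v (f v)) ∧
  (∀ v ∈ X, ∀ w ∈ Y, outdeg E v + ℓ < outdeg E w)

/-- A `k`-backward tangle: a partition `(X,Y)` of the vertex set with at least `k` arcs
from `X` to `Y`, and every outdegree in `Y` at least every outdegree in `X`. -/
def BackwardTangle {V : Type*} (E : V → V → Prop) (k : ℕ) (X Y : Set V) : Prop :=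
  X ∪ Y = Set.univ ∧ Disjoint X Y ∧
  k ≤ {p : V × V | p.1 ∈ X ∧ p.2 ∈ Y ∧ E p.1 p.2}.ncard ∧
  (∀ v ∈ X, ∀ w ∈ Y, outdeg E v ≤ outdeg E w)

/-- The width of an ordering of the vertices (given as a bijection from `Fin n`):
the maximum, over prefixes, of the number of arcs leaving the prefix forward. -/
noncomputable def orderWidth {V : Type*} [Fintype V] (E : V → V → Prop)
    (e : Fin (Fintype.card V) ≃ V) : ℕ :=
  ⨆ α : Fin (Fintype.card V + 1),
    {p : V × V | ((e.symm p.1 : ℕ) < (α : ℕ)) ∧ ¬ ((e.symm p.2 : ℕ) < (α : ℕ)) ∧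
      E p.1 p.2}.ncard

/-- The cutwidth of a digraph: the minimum width over all orderings of the vertices. -/
noncomputable def cutwidth {V : Type*} [Fintype V] (E : V → V → Prop) : ℕ :=
  ⨅ e : Fin (Fintype.card V) ≃ V, orderWidth E e

/-- `(X,Y)` is a bipartition of the simple graph `G`. -/
def IsBipartition {V : Type*} (G : SimpleGraph V) (X Y : Set V) : Prop :=
  X ∪ Y = Set.univ ∧ Disjoint X Y ∧
  ∀ u v : V, G.Adj u v → (u ∈ X ∧ v ∈ Y) ∨ (u ∈ Y ∧ v ∈ X)

/-- A matching of `G`: a set of edges of `G` that are pairwise vertex-disjoint. -/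
def IsMatching {V : Type*} (G : SimpleGraph V) (M : Set (Sym2 V)) : Prop :=
  M ⊆ G.edgeSet ∧ ∀ e ∈ M, ∀ f ∈ M, e ≠ f → ∀ v : V, v ∈ e → v ∉ f

/-- A maximum matching of `G`. -/
def IsMaxMatching {V : Type*} [Fintype V] (G : SimpleGraph V) (M : Set (Sym2 V)) : Prop :=
  IsMatching G M ∧ ∀ N : Set (Sym2 V), IsMatching G N → N.ncard ≤ M.ncard

/-- A vertex is covered by a matching if it is an endpoint of one of its edges. -/
def CoveredBy {V : Type*} (M : Set (Sym2 V)) (v : V) : Prop := ∃ e ∈ M, v ∈ e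

/-- A vertex is covered by every maximum matching of `G`. -/
def CoveredByAllMax {V : Type*} [Fintype V] (G : SimpleGraph V) (v : V) : Prop :=
  ∀ M : Set (Sym2 V), IsMaxMatching G M → CoveredBy M v

/-- Deletion of the vertex `w` from a simple graph (keeping the vertex type). -/
def deleteVert {V : Type*} (G : SimpleGraph V) (w : V) : SimpleGraph V where
  Adj x y := G.Adj x y ∧ x ≠ w ∧ y ≠ w
  symm := ⟨fun _ _ h => ⟨h.1.symm, h.2.2, h.2.1⟩⟩
  loopless := ⟨fun x h => G.loopless.irrefl x h.1⟩

/-- An `M`-alternating path from `u` to `v`: a (possibly trivial) path starting at `u` and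
ending at `v` whose edges alternate between non-matching and matching edges, beginning
with a non-matching edge. -/
def AltPathFrom {V : Type*} (G : SimpleGraph V) (M : Set (Sym2 V)) (u v : V) : Prop :=
  ∃ p : List V, p ≠ [] ∧ p.Nodup ∧ p.Chain' G.Adj ∧
    p.head? = some u ∧ p.getLast? = some v ∧
    ∀ i : ℕ, (h : i + 1 < p.length) →
      (s(p.get ⟨i, Nat.lt_of_succ_lt h⟩, p.get ⟨i + 1, h⟩) ∈ M ↔ i % 2 = 1)
/-- A path decomposition of width at most `p` with no two consecutive bags
equal yields, via prefix/suffix unions, a separation chain of width at most `p`. -/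
theorem stmt_2 {V : Type*} [Fintype V] (E : V → V → Prop) {r : ℕ} (Bs : Fin r → Set V)
    (hW : IsPathDecomp E Bs) (p : ℕ) (hwidth : ∀ i, (Bs i).ncard - 1 ≤ p)
    (hcons : ∀ i j : Fin r, (j : ℕ) = (i : ℕ) + 1 → Bs i ≠ Bs j) :
    IsSepChain E
      (fun α : Fin (r + 1) => ⋃ (j : Fin r) (_ : (j : ℕ) < (α : ℕ)), Bs j)
      (fun α : Fin (r + 1) => ⋃ (j : Fin r) (_ : (α : ℕ) ≤ (j : ℕ)), Bs j) ∧
    ∀ α : Fin (r + 1),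
      ((⋃ (j : Fin r) (_ : (j : ℕ) < (α : ℕ)), Bs j) ∩
        (⋃ (j : Fin r) (_ : (α : ℕ) ≤ (j : ℕ)), Bs j)).ncard ≤ p := by
  obtain ⟨hcover, hinterp, harcs⟩ := hW
  have hmem : ∀ x : V, ∃ j : Fin r, x ∈ Bs j := by
    intro x
    have hx : x ∈ (⋃ i, Bs i) := by rw [hcover]; trivial
    simpa using hx
  constructor
  · refine ⟨?_, ?_, ?_, ?_, ?_, ?_⟩
    · simp
    · ext x
      simp only [Set.mem_iUnion, Set.mem_univ, iff_true]
      obtain ⟨j, hj⟩ := hmem x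
      exact ⟨j, Nat.zero_le _, hj⟩
    · ext x
      simp only [Set.mem_iUnion, Set.mem_univ, iff_true]
      obtain ⟨j, hj⟩ := hmem x
      exact ⟨j, by simp [j.isLt], hj⟩
    · ext x
      simp only [Set.mem_iUnion, Set.mem_empty_iff_false, iff_false, not_exists]
      intro j hj
      have := j.isLt
      simp only [Fin.val_last] at hj
      omega
    · intro α
      constructor
      · ext x
        simp only [Set.mem_union, Set.mem_iUnion, Set.mem_univ, iff_true]
        obtain ⟨j, hj⟩ := hmem x
        rcases lt_or_ge (j : ℕ) (α : ℕ) with h | h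
        · exact Or.inl ⟨j, h, hj⟩
        · exact Or.inr ⟨j, h, hj⟩
      · rintro v ⟨hvA, hvB⟩ w ⟨hwB, hwA⟩ hE
        simp only [Set.mem_iUnion, not_exists] at hvA hvB hwB hwA
        rcases harcs v w hE with ⟨i, hvi, hwi⟩ | ⟨i, j', hj'i, hvi, hwj'⟩
        · have h1 : ¬ ((α : ℕ) ≤ (i : ℕ)) := fun h => hvB i h hvi
          have h2 : ¬ ((i : ℕ) < (α : ℕ)) := fun h => hwA i h hwi
          omega
        · have h1 : ¬ ((α : ℕ) ≤ (i : ℕ)) := fun h => hvB i h hvi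
          have h2 : ¬ ((j' : ℕ) < (α : ℕ)) := fun h => hwA j' h hwj'
          have h3 : (j' : ℕ) < (i : ℕ) := hj'i
          omega
    · intro i j hij
      have hij' : (i : ℕ) ≤ (j : ℕ) := hij
      constructor
      · intro x hx
        simp only [Set.mem_iUnion] at hx ⊢
        obtain ⟨k, hk, hxk⟩ := hx
        exact ⟨k, by omega, hxk⟩
      · intro x hx
        simp only [Set.mem_iUnion] at hx ⊢
        obtain ⟨k, hk, hxk⟩ := hx
        exact ⟨k, by omega, hxk⟩
  · intro α
    rcases Nat.eq_zero_or_pos (α : ℕ) with h0 | hpos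
    · have hA : (⋃ (j : Fin r) (_ : (j : ℕ) < (α : ℕ)), Bs j) = ∅ := by
        ext x
        simp only [Set.mem_iUnion, Set.mem_empty_iff_false, iff_false, not_exists]
        intro j hj
        omega
      rw [hA]
      simp
    · rcases eq_or_lt_of_le (show (α : ℕ) ≤ r from Nat.lt_succ_iff.mp α.isLt) with hr | hr
      · have hB : (⋃ (j : Fin r) (_ : (α : ℕ) ≤ (j : ℕ)), Bs j) = ∅ := by
          ext x
          simp only [Set.mem_iUnion, Set.mem_empty_iff_false, iff_false, not_exists]
          intro j hj
          have := j.isLt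
          omega
        rw [hB]
        simp
      · have hm1 : (α : ℕ) - 1 < r := by omega
        set m1 : Fin r := ⟨(α : ℕ) - 1, hm1⟩ with hm1def
        set m2 : Fin r := ⟨(α : ℕ), hr⟩ with hm2def
        have hsub : ((⋃ (j : Fin r) (_ : (j : ℕ) < (α : ℕ)), Bs j) ∩
            (⋃ (j : Fin r) (_ : (α : ℕ) ≤ (j : ℕ)), Bs j)) ⊆ Bs m1 ∩ Bs m2 := by
          rintro x ⟨hx1, hx2⟩
          simp only [Set.mem_iUnion] at hx1 hx2
          obtain ⟨j, hj, hxj⟩ := hx1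
          obtain ⟨l, hl, hxl⟩ := hx2
          constructor
          · rcases eq_or_lt_of_le (show (j : ℕ) ≤ (α : ℕ) - 1 by omega) with h | h
            · have : j = m1 := Fin.ext (by simp [hm1def, h])
              rwa [← this]
            · exact hinterp j m1 l (show (j : ℕ) < (m1 : ℕ) by simp [hm1def]; omega)
                (show ((m1 : Fin r) : ℕ) < (l : ℕ) by simp [hm1def]; omega) ⟨hxj, hxl⟩
          · rcases eq_or_lt_of_le hl with h | h
            · have : l = m2 := Fin.ext (by simp [hm2def, ← h])
              rwa [← this]
            · exact hinterp j m2 l (show (j : ℕ) < (m2 : ℕ) by simp [hm2def]; omega)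
                (show ((m2 : Fin r) : ℕ) < (l : ℕ) by simp [hm2def]; omega) ⟨hxj, hxl⟩
        have hne : Bs m1 ≠ Bs m2 := hcons m1 m2 (by simp [hm1def, hm2def]; omega)
        have hS : Bs m1 ∩ Bs m2 ≠ Bs m1 ∨ Bs m1 ∩ Bs m2 ≠ Bs m2 := by
          by_contra h
          push_neg at h
          exact hne (h.1.symm.trans h.2)
        have hcard : (Bs m1 ∩ Bs m2).ncard + 1 ≤ p + 1 := by
          rcases hS with h | h
          · have hss : Bs m1 ∩ Bs m2 ⊂ Bs m1 := ⟨Set.inter_subset_left, fun hc => h (le_antisymm Set.inter_subset_left hc)⟩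
            have h1 : (Bs m1 ∩ Bs m2).ncard < (Bs m1).ncard := Set.ncard_lt_ncard hss (Set.toFinite _)
            have h2 := hwidth m1
            omega
          · have hss : Bs m1 ∩ Bs m2 ⊂ Bs m2 := ⟨Set.inter_subset_right, fun hc => h (le_antisymm Set.inter_subset_right hc)⟩
            have h1 : (Bs m1 ∩ Bs m2).ncard < (Bs m2).ncard := Set.ncard_lt_ncard hss (Set.toFinite _)
            have h2 := hwidth m2
            omega
        have hle := Set.ncard_le_ncard hsub (Set.toFinite _)
        omega
end

section
/- Let ((A_0,B_0), …, (A_r,B_r)) be a separation chain in a finite digraph T. Then the sequence W = (W_1, …, W_r) defined by W_i = A_i ∩ B_{i−1} is a path decomposition of T of width equal to (max over 1 ≤ i ≤ r of |A_i ∩ B_{i−1}|) − 1. -/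
lemma sup_sub_one {r : ℕ} (f : Fin r → ℕ) :
    (⨆ i, (f i - 1)) = (⨆ i, f i) - 1 := by
  rcases Nat.eq_zero_or_pos r with h | h
  · subst h
    simp [ciSup_of_empty]
  · have : Nonempty (Fin r) := ⟨⟨0, h⟩⟩
    obtain ⟨i0, hi0⟩ := Finite.exists_max f
    apply le_antisymm
    · exact ciSup_le fun i =>
        Nat.sub_le_sub_right (le_ciSup (Set.finite_range f).bddAbove i) 1
    · have h1 : (⨆ i, f i) = f i0 :=
        le_antisymm (ciSup_le hi0) (le_ciSup (Set.finite_range f).bddAbove i0)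
      rw [h1]
      exact le_ciSup (Set.finite_range (fun i => f i - 1)).bddAbove i0

lemma exists_min_bag {V : Type*} (E : V → V → Prop) {r : ℕ}
    (A B : Fin (r + 1) → Set V) (hc : IsSepChain E A B) (v : V) :
    ∃ j : Fin r, v ∈ A j.succ ∧ v ∈ B j.castSucc ∧ ∀ i, v ∈ A i → j.succ ≤ i := by
  classical
  obtain ⟨hA0, hB0, hAr, hBr, hsep, hmono⟩ := hc
  have hne : (Finset.univ.filter (fun i => v ∈ A i)).Nonempty :=
    ⟨Fin.last r, by simp [hAr]⟩
  set a := (Finset.univ.filter (fun i => v ∈ A i)).min' hne with ha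
  have hva : v ∈ A a := by
    have := Finset.min'_mem _ hne
    simpa [← ha] using this
  have hmin : ∀ i, v ∈ A i → a ≤ i := fun i hi =>
    Finset.min'_le _ _ (by simpa using hi)
  have ha0 : a ≠ 0 := by
    intro h
    rw [h, hA0] at hva
    exact hva
  refine ⟨a.pred ha0, ?_, ?_, ?_⟩
  · rwa [Fin.succ_pred]
  · have hlt : (a.pred ha0).castSucc < a := by
      conv_rhs => rw [← Fin.succ_pred a ha0]
      exact Fin.castSucc_lt_succ
    have hnA : v ∉ A ((a.pred ha0).castSucc) := fun h =>
      absurd (hmin _ h) (not_le.mpr hlt)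
    have hcov : v ∈ A ((a.pred ha0).castSucc) ∪ B ((a.pred ha0).castSucc) :=
      (hsep _).1.symm ▸ Set.mem_univ v
    exact hcov.resolve_left hnA
  · intro i hi
    rw [Fin.succ_pred]
    exact hmin i hi

/-- A separation chain yields a path decomposition whose bags are
`W i = A i ∩ B (i-1)`, of width `max |A i ∩ B (i-1)| - 1`. -/
theorem stmt_3 {V : Type*} [Fintype V] (E : V → V → Prop) {r : ℕ}
    (A B : Fin (r + 1) → Set V) (hc : IsSepChain E A B) :
    IsPathDecomp E (fun i : Fin r => A i.succ ∩ B i.castSucc) ∧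
    (⨆ i : Fin r, ((A i.succ ∩ B i.castSucc).ncard - 1)) =
      (⨆ i : Fin r, (A i.succ ∩ B i.castSucc).ncard) - 1 := by
  obtain ⟨hA0, hB0, hAr, hBr, hsep, hmono⟩ := hc
  have hc' : IsSepChain E A B := ⟨hA0, hB0, hAr, hBr, hsep, hmono⟩
  refine ⟨⟨?_, ?_, ?_⟩, sup_sub_one _⟩
  · -- cover
    apply Set.eq_univ_of_forall
    intro v
    obtain ⟨j, h1, h2, _⟩ := exists_min_bag E A B hc' v
    exact Set.mem_iUnion.mpr ⟨j, h1, h2⟩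
  · -- interpolation
    intro i j l hij hjl v hv
    obtain ⟨⟨hvi, _⟩, ⟨_, hvl⟩⟩ := hv
    exact ⟨(hmono i.succ j.succ (Fin.succ_le_succ_iff.mpr hij.le)).1 hvi,
      (hmono j.castSucc l.castSucc (Fin.castSucc_le_castSucc_iff.mpr hjl.le)).2 hvl⟩
  · -- arcs
    intro u v huv
    obtain ⟨ju, hu1, hu2, humin⟩ := exists_min_bag E A B hc' u
    obtain ⟨jv, hv1, hv2, hvmin⟩ := exists_min_bag E A B hc' v
    rcases lt_trichotomy jv ju with h | h | h
    · exact Or.inr ⟨ju, jv, h, ⟨hu1, hu2⟩, ⟨hv1, hv2⟩⟩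
    · exact Or.inl ⟨ju, ⟨hu1, hu2⟩, h ▸ ⟨hv1, hv2⟩⟩
    · -- ju < jv : show u ∈ bag jv
      left
      refine ⟨jv, ⟨(hmono ju.succ jv.succ (Fin.succ_le_succ_iff.mpr h.le)).1 hu1, ?_⟩, hv1, hv2⟩
      by_contra hnB
      have hsle : ju.succ ≤ jv.castSucc := by
        have := Fin.lt_def.mp h
        rw [Fin.le_def]
        simpa using this
      have huA : u ∈ A jv.castSucc := (hmono ju.succ jv.castSucc hsle).1 hu1
      have hvnA : v ∉ A jv.castSucc := fun hvA =>
        absurd (hvmin _ hvA) (not_le.mpr Fin.castSucc_lt_succ)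
      exact (hsep jv.castSucc).2 u ⟨huA, hnB⟩ v ⟨hv2, hvnA⟩ huv
end

section
/- If a finite digraph T contains a (dk, d)-short jungle for some integers d > 1 and k ≥ 0, then every simple digraph S with |V(S)| + |E(S)| ≤ k is topologically contained in T. -/
lemma internals_card_le {V : Type*} [DecidableEq V] (p : List V) (d : ℕ)
    (h : pathLen p ≤ d) : (internals p).toFinset.card ≤ d - 1 := by
  have h1 : (internals p).toFinset.card ≤ (internals p).length := List.toFinset_card_le _
  have h2 : (internals p).length = p.length - 1 - 1 := by
    simp [internals]
  unfold pathLen at h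
  omega

lemma exists_unblocked {V : Type*} [DecidableEq V] {m : ℕ} (P : Fin m → List V)
    (hdisj : ∀ i j, i ≠ j → ∀ z ∈ internals (P i), z ∉ internals (P j))
    (S : Finset V) (hS : S.card < m) :
    ∃ i, ∀ z ∈ internals (P i), z ∉ S := by
  by_contra h
  push_neg at h
  choose f hf1 hf2 using h
  have hinj : Function.Injective f := by
    intro i j hef
    by_contra hne
    exact hdisj i j hne _ (hf1 i) (hef ▸ hf1 j)
  have hm : m ≤ S.card := by
    have := Finset.card_le_card_of_injOn (s := Finset.univ) f (fun i _ => hf2 i)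
      (fun i _ j _ h => hinj h)
    simpa using this
  omega

lemma build {V W : Type*} [Fintype V] [Fintype W] [DecidableEq V] [DecidableEq W]
    (E : V → V → Prop) (d k : ℕ) (hd : 1 < d) (X : Set V) (hX : ShortJungle E (d * k) d X)
    (η : W → V) (hη : Function.Injective η) (hrange : ∀ w, η w ∈ X)
    (arcs : Finset (W × W)) (hloop : ∀ p ∈ arcs, p.1 ≠ p.2)
    (hk : Fintype.card W + arcs.card ≤ k) :
    ∀ F : Finset (W × W), F ⊆ arcs →
    ∃ P : W → W → List V,
      (∀ u v, (u, v) ∈ F → PathFrom E (η u) (η v) (P u v) ∧ pathLen (P u v) ≤ d) ∧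
      (∀ u v, (u, v) ∈ F → ∀ z ∈ internals (P u v), z ∉ Set.range η) ∧
      (∀ u v u' v', (u, v) ∈ F → (u', v') ∈ F → (u, v) ≠ (u', v') →
        ∀ z ∈ internals (P u v), z ∉ internals (P u' v')) := by
  classical
  intro F
  induction F using Finset.induction_on with
  | empty =>
    intro _
    exact ⟨fun _ _ => [], fun u v h => by simp at h, fun u v h => by simp at h,
      fun u v u' v' h => by simp at h⟩
  | @insert a F haF ih =>
    intro hsub
    obtain ⟨P, h1, h2, h3⟩ := ih (fun x hx => hsub (Finset.mem_insert_of_mem hx))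
    obtain ⟨u₀, v₀⟩ := a
    have ha : (u₀, v₀) ∈ arcs := hsub (Finset.mem_insert_self _ _)
    have hne : η u₀ ≠ η v₀ := fun h => hloop _ ha (hη h)
    obtain ⟨Q, hQinj, hQpath, hQdisj⟩ :=
      hX.2 (η u₀) (hrange u₀) (η v₀) (hrange v₀) hne
    set S : Finset V :=
      (Finset.univ.image η) ∪ F.biUnion (fun p => (internals (P p.1 p.2)).toFinset)
      with hSdef
    have hScard : S.card < d * k := by
      have hcard1 : (Finset.univ.image η).card ≤ Fintype.card W := by
        simpa using Finset.card_image_le (s := (Finset.univ : Finset W)) (f := η)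
      have hcard2 : (F.biUnion fun p => (internals (P p.1 p.2)).toFinset).card
          ≤ F.card * (d - 1) := by
        refine le_trans Finset.card_biUnion_le ?_
        have := Finset.sum_le_card_nsmul F (fun p => (internals (P p.1 p.2)).toFinset.card)
          (d - 1) (fun p hp => internals_card_le _ _ (h1 p.1 p.2 (by simpa using hp)).2)
        simpa [smul_eq_mul] using this
      have hSle : S.card ≤ Fintype.card W + F.card * (d - 1) :=
        le_trans (Finset.card_union_le _ _) (Nat.add_le_add hcard1 hcard2)
      have hins : F.card + 1 ≤ arcs.card := by
        rw [← Finset.card_insert_of_notMem haF]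
        exact Finset.card_le_card hsub
      obtain ⟨c, rfl⟩ : ∃ c, d = c + 1 := ⟨d - 1, by omega⟩
      have hc : 1 ≤ c := by omega
      have hc1 : c + 1 - 1 = c := by omega
      rw [hc1] at hSle
      have hk' : Fintype.card W + F.card + 1 ≤ k := by omega
      have hmul : c * (Fintype.card W + F.card + 1) ≤ c * k :=
        Nat.mul_le_mul_left c hk'
      nlinarith [hSle, hmul, hk', hc]
    obtain ⟨i, hi⟩ := exists_unblocked Q hQdisj S hScard
    have hsubS : ∀ u' v', (u', v') ∈ F → ∀ z ∈ internals (P u' v'), z ∈ S := by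
      intro u' v' h' z hz
      exact Finset.mem_union_right _
        (Finset.mem_biUnion.mpr ⟨(u', v'), h', List.mem_toFinset.mpr hz⟩)
    set P' : W → W → List V := fun u v => if (u, v) = (u₀, v₀) then Q i else P u v with hP'
    have hnew : ∀ u v, (u, v) = (u₀, v₀) → P' u v = Q i := by
      intro u v h; simp only [hP']; exact if_pos h
    have hold : ∀ u v, (u, v) ≠ (u₀, v₀) → P' u v = P u v := by
      intro u v h; simp only [hP']; exact if_neg h
    refine ⟨P', ?_, ?_, ?_⟩
    · intro u v huv
      rcases Finset.mem_insert.mp huv with h | h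
      · rw [hnew u v h]
        have hu : u = u₀ := congrArg Prod.fst h
        have hv : v = v₀ := congrArg Prod.snd h
        rw [hu, hv]
        exact hQpath i
      · rw [hold u v (fun hh => haF (hh ▸ h))]
        exact h1 u v h
    · intro u v huv z hz hzr
      rcases Finset.mem_insert.mp huv with h | h
      · rw [hnew u v h] at hz
        obtain ⟨w, rfl⟩ := hzr
        exact hi _ hz (Finset.mem_union_left _ (Finset.mem_image_of_mem η (Finset.mem_univ w)))
      · rw [hold u v (fun hh => haF (hh ▸ h))] at hz
        exact h2 u v h z hz hzr
    · intro u v u' v' huv hu'v' hnep z hz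
      rcases Finset.mem_insert.mp huv with h | h <;>
        rcases Finset.mem_insert.mp hu'v' with h' | h'
      · exact absurd (h.trans h'.symm) hnep
      · rw [hnew u v h] at hz
        rw [hold u' v' (fun hh => haF (hh ▸ h'))]
        exact fun hzz => hi _ hz (hsubS u' v' h' z hzz)
      · rw [hold u v (fun hh => haF (hh ▸ h))] at hz
        rw [hnew u' v' h']
        exact fun hzz => hi _ hzz (hsubS u v h z hz)
      · rw [hold u v (fun hh => haF (hh ▸ h))] at hz
        rw [hold u' v' (fun hh => haF (hh ▸ h'))]
        exact h3 u v u' v' h h' hnep z hz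

/-- A digraph containing a `(dk, d)`-short jungle (`d > 1`) topologically
contains every simple digraph `S` with `|V(S)| + |E(S)| ≤ k`. -/
theorem stmt_4 {V W : Type*} [Fintype V] [Fintype W] (E : V → V → Prop)
    (d k : ℕ) (hd : 1 < d) (X : Set V) (hX : ShortJungle E (d * k) d X)
    (Eh : W → W → Prop) (hS : ∀ w : W, ¬ Eh w w)
    (hsize : Fintype.card W + {p : W × W | Eh p.1 p.2}.ncard ≤ k) :
    TopContain Eh E := by
  classical
  -- the arcs of `S` as a finset
  have hfin : {p : W × W | Eh p.1 p.2}.Finite := Set.toFinite _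
  set arcs : Finset (W × W) := hfin.toFinset with harcs
  have hmem : ∀ p : W × W, p ∈ arcs ↔ Eh p.1 p.2 := fun p => hfin.mem_toFinset
  have hcardarcs : {p : W × W | Eh p.1 p.2}.ncard = arcs.card :=
    Set.ncard_eq_toFinset_card _ hfin
  have hk : Fintype.card W + arcs.card ≤ k := by omega
  -- an injection of the vertices of `S` into the jungle `X`
  have hcardX : Fintype.card W ≤ Fintype.card X := by
    have h1 : Fintype.card W ≤ k := by omega
    have h2 : k ≤ d * k := Nat.le_mul_of_pos_left k (by omega)
    have h3 : X.ncard = Fintype.card X := by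
      rw [Set.ncard_eq_toFinset_card', Set.toFinset_card]
    have h4 : d * k ≤ X.ncard := hX.1
    omega
  obtain ⟨η₀⟩ : Nonempty (W ↪ X) := Function.Embedding.nonempty_of_card_le hcardX
  set η : W → V := fun w => (η₀ w : V) with hη'
  have hη : Function.Injective η := fun a b h => η₀.injective (Subtype.ext h)
  have hrange : ∀ w, η w ∈ X := fun w => (η₀ w).2
  have hloop : ∀ p ∈ arcs, p.1 ≠ p.2 := by
    intro p hp he
    exact hS p.2 (he ▸ (hmem p).mp hp)
  obtain ⟨P, h1, h2, h3⟩ := build E d k hd X hX η hη hrange arcs hloop hk arcs le_rfl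
  refine ⟨η, P, hη, ?_, ?_, ?_⟩
  · exact fun u v h => (h1 u v ((hmem (u, v)).mpr h)).1
  · exact fun u v h => h2 u v ((hmem (u, v)).mpr h)
  · exact fun u v u' v' h h' => h3 u v u' v' ((hmem (u, v)).mpr h) ((hmem (u', v')).mpr h')
end

section
/- If a finite digraph T contains a (dk, d)-short immersion jungle for some integers d > 1 and k ≥ 0, then every simple digraph S with |V(S)| + |E(S)| ≤ k is immersed in T. -/

lemma greedy_aux {V W : Type*} (E : V → V → Prop) (d k : ℕ) (hd : 0 < d)
    (η : W → V)
    (hjungle : ∀ u v : W, u ≠ v → ∃ P : Fin (d * k) → List V,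
      (∀ i, PathFrom E (η u) (η v) (P i) ∧ pathLen (P i) ≤ d) ∧
      (∀ i j, i ≠ j → ∀ a ∈ arcsOf (P i), a ∉ arcsOf (P j)))
    (Eh : W → W → Prop) (hS : ∀ w, ¬ Eh w w) :
    ∀ s : Finset (W × W), (∀ p ∈ s, Eh p.1 p.2) → s.card ≤ k →
      ∃ P : W → W → List V,
        (∀ p ∈ s, PathFrom E (η p.1) (η p.2) (P p.1 p.2) ∧ pathLen (P p.1 p.2) ≤ d) ∧
        (∀ p ∈ s, ∀ q ∈ s, p ≠ q → ∀ a ∈ arcsOf (P p.1 p.2), a ∉ arcsOf (P q.1 q.2)) := by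
  classical
  intro s
  induction s using Finset.induction_on with
  | empty =>
    intro _ _
    exact ⟨fun _ _ => [], fun p hp => absurd hp (by simp), fun p hp => absurd hp (by simp)⟩
  | @insert p s hp IH =>
    intro harcs hcard
    have hcards : s.card + 1 ≤ k := by
      rwa [Finset.card_insert_of_notMem hp] at hcard
    obtain ⟨P0, h1, h2⟩ := IH (fun q hq => harcs q (Finset.mem_insert_of_mem hq))
      (by omega)
    have hne : p.1 ≠ p.2 := by
      intro h
      exact hS p.2 (h ▸ harcs p (Finset.mem_insert_self p s))
    obtain ⟨cand, hcand, hcanddisj⟩ := hjungle p.1 p.2 hne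
    set U : Finset (V × V) := s.biUnion (fun q => (arcsOf (P0 q.1 q.2)).toFinset) with hUdef
    have hUcard : U.card ≤ s.card * d := by
      refine le_trans (Finset.card_biUnion_le) ?_
      refine le_trans (Finset.sum_le_card_nsmul s _ d ?_) (by simp [mul_comm])
      intro q hq
      refine le_trans (List.toFinset_card_le _) ?_
      have hlen : (arcsOf (P0 q.1 q.2)).length = pathLen (P0 q.1 q.2) := by
        have hnil : P0 q.1 q.2 ≠ [] := ((h1 q hq).1).1.1
        simp only [arcsOf, pathLen, List.length_zip, List.length_drop]
        omega
      rw [hlen]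
      exact (h1 q hq).2
    -- find a good candidate index
    have hgood : ∃ i : Fin (d * k), ∀ a ∈ arcsOf (cand i), a ∉ U := by
      by_contra hbad
      push_neg at hbad
      choose a ha1 ha2 using hbad
      have hainj : Function.Injective a := by
        intro i j hij
        by_contra hij'
        exact hcanddisj i j hij' (a i) (ha1 i) (hij ▸ ha1 j)
      have : (Finset.univ : Finset (Fin (d * k))).card ≤ U.card :=
        Finset.card_le_card_of_injOn a (fun i _ => ha2 i) (hainj.injOn)
      simp only [Finset.card_univ, Fintype.card_fin] at this
      have : d * k ≤ s.card * d := le_trans this hUcard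
      have hlt : s.card * d < k * d := by
        have hsk : s.card < k := by omega
        exact (Nat.mul_lt_mul_right hd).mpr hsk
      have hcomm : d * k = k * d := Nat.mul_comm d k
      omega
    obtain ⟨i, hi⟩ := hgood
    refine ⟨fun u v => if (u, v) = p then cand i else P0 u v, ?_, ?_⟩
    · intro q hq
      rcases Finset.mem_insert.mp hq with rfl | hq'
      · simpa using hcand i
      · have hqp : (q.1, q.2) ≠ p := by simpa using (ne_of_mem_of_not_mem hq' hp)
        simpa [hqp] using h1 q hq'
    · intro q hq q' hq' hqq'
      have hsubU : ∀ r ∈ s, ∀ a ∈ arcsOf (P0 r.1 r.2), a ∈ U := by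
        intro r hr a ha
        exact Finset.mem_biUnion.mpr ⟨r, hr, List.mem_toFinset.mpr ha⟩
      rcases Finset.mem_insert.mp hq with rfl | hq1 <;>
        rcases Finset.mem_insert.mp hq' with h' | hq2
      · exact absurd h'.symm hqq'
      · have hqp' : (q'.1, q'.2) ≠ q := by simpa using (ne_of_mem_of_not_mem hq2 hp)
        simp only [Prod.mk.eta, if_pos rfl, hqp', if_neg hqp']
        intro a ha ha'
        exact hi a ha (hsubU q' hq2 a ha')
      · subst h'
        have hqp : (q.1, q.2) ≠ q' := by simpa using (ne_of_mem_of_not_mem hq1 hp)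
        simp only [Prod.mk.eta, if_pos rfl, hqp, if_neg hqp]
        intro a ha ha'
        exact hi a ha' (hsubU q hq1 a ha)
      · have hqp : (q.1, q.2) ≠ p := by simpa using (ne_of_mem_of_not_mem hq1 hp)
        have hqp' : (q'.1, q'.2) ≠ p := by simpa using (ne_of_mem_of_not_mem hq2 hp)
        simpa [hqp, hqp'] using h2 q hq1 q' hq2 hqq'

/-- A digraph containing a `(dk, d)`-short immersion jungle (`d > 1`) admits
every simple digraph `S` with `|V(S)| + |E(S)| ≤ k` as an immersion. -/
theorem stmt_5 {V W : Type*} [Fintype V] [Fintype W] (E : V → V → Prop)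
    (d k : ℕ) (hd : 1 < d) (X : Set V) (hX : ShortImmersionJungle E (d * k) d X)
    (Eh : W → W → Prop) (hS : ∀ w : W, ¬ Eh w w)
    (hsize : Fintype.card W + {p : W × W | Eh p.1 p.2}.ncard ≤ k) :
    Immerses Eh E := by
  classical
  obtain ⟨hcard, hpaths⟩ := hX
  have hk0 : k ≤ d * k := Nat.le_mul_of_pos_left k (by omega)
  haveI : Fintype X := X.toFinite.fintype
  have hXcard : X.ncard = Fintype.card X := by
    rw [Set.ncard_eq_toFinset_card', Set.toFinset_card]
  have hWle : Fintype.card W ≤ Fintype.card X := by omega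
  obtain ⟨e⟩ : Nonempty (W ↪ X) := Function.Embedding.nonempty_of_card_le hWle
  set η : W → V := fun w => (e w : V) with hηdef
  have hηX : ∀ w, η w ∈ X := fun w => (e w).2
  have hηinj : Function.Injective η := fun u v h => e.injective (Subtype.ext h)
  have hjungle : ∀ u v : W, u ≠ v → ∃ P : Fin (d * k) → List V,
      (∀ i, PathFrom E (η u) (η v) (P i) ∧ pathLen (P i) ≤ d) ∧
      (∀ i j, i ≠ j → ∀ a ∈ arcsOf (P i), a ∉ arcsOf (P j)) := by
    intro u v huv
    obtain ⟨P, _, h1, h2⟩ := hpaths (η u) (hηX u) (η v) (hηX v) (fun h => huv (hηinj h))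
    exact ⟨P, h1, h2⟩
  have hA : ({p : W × W | Eh p.1 p.2}).Finite := Set.toFinite _
  have hAcard : hA.toFinset.card = ({p : W × W | Eh p.1 p.2}).ncard :=
    (Set.ncard_eq_toFinset_card _ hA).symm
  obtain ⟨P, h1, h2⟩ := greedy_aux E d k (by omega) η hjungle Eh hS hA.toFinset
    (fun p hp => (hA.mem_toFinset.mp hp)) (by omega)
  refine ⟨η, P, hηinj, ?_, ?_⟩
  · intro u v huv
    exact (h1 (u, v) (hA.mem_toFinset.mpr huv)).1
  · intro u v u' v' huv huv' hne a ha
    exact h2 (u, v) (hA.mem_toFinset.mpr huv) (u', v') (hA.mem_toFinset.mpr huv') hne a ha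
end

section
/- Let T be a semi-complete digraph and k a nonnegative integer. If T contains a (5k+2, k)-degree tangle, then the pathwidth of T is strictly greater than k. -/
private def pref {V : Type*} {r : ℕ} (Bs : Fin r → Set V) (i : ℕ) : Set V :=
  {v | ∃ j : Fin r, (j : ℕ) < i ∧ v ∈ Bs j}

private def suff {V : Type*} {r : ℕ} (Bs : Fin r → Set V) (i : ℕ) : Set V :=
  {v | ∃ j : Fin r, i ≤ (j : ℕ) ∧ v ∈ Bs j}

private lemma mem_pref {V : Type*} {r : ℕ} {Bs : Fin r → Set V} {i : ℕ} {v : V} :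
    v ∈ pref Bs i ↔ ∃ j : Fin r, (j : ℕ) < i ∧ v ∈ Bs j := Iff.rfl

private lemma mem_suff {V : Type*} {r : ℕ} {Bs : Fin r → Set V} {i : ℕ} {v : V} :
    v ∈ suff Bs i ↔ ∃ j : Fin r, i ≤ (j : ℕ) ∧ v ∈ Bs j := Iff.rfl

private lemma core6 {V : Type*} [Fintype V] (E : V → V → Prop) (hT : SemiComplete E)
    (k : ℕ) (X : Set V) (hX : DegreeTangle E (5 * k + 2) k X)
    {r : ℕ} (Bs : Fin r → Set V) (hdec : IsPathDecomp E Bs)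
    (hb : ∀ i, (Bs i).ncard ≤ k + 1) : False := by
  classical
  obtain ⟨hXc, htang⟩ := hX
  obtain ⟨hcov, hmono, harc⟩ := hdec
  have hfin : ∀ s : Set V, s.Finite := fun s => s.toFinite
  set A : ℕ → Set V := pref Bs with hAdef
  set B : ℕ → Set V := suff Bs with hBdef
  -- X is nonempty
  have hXne : X.Nonempty := by
    rcases X.eq_empty_or_nonempty with h | h
    · rw [h, Set.ncard_empty] at hXc; omega
    · exact h
  obtain ⟨v0, hv0⟩ := hXne
  have hv0' : v0 ∈ ⋃ i, Bs i := by rw [hcov]; trivial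
  rw [Set.mem_iUnion] at hv0'
  obtain ⟨j0, hj0⟩ := hv0'
  have hr : 1 ≤ r := Nat.one_le_iff_ne_zero.mpr (by rintro rfl; exact j0.elim0)
  have hcover : ∀ (i : ℕ) (v : V), v ∈ A i ∨ v ∈ B i := by
    intro i v
    have hv : v ∈ ⋃ j, Bs j := by rw [hcov]; trivial
    rw [Set.mem_iUnion] at hv
    obtain ⟨j, hj⟩ := hv
    rcases lt_or_ge (j : ℕ) i with h | h
    · exact Or.inl (mem_pref.mpr ⟨j, h, hj⟩)
    · exact Or.inr (mem_suff.mpr ⟨j, h, hj⟩)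
  have hsep : ∀ (i : ℕ) (u v : V), u ∈ A i → u ∉ B i → v ∉ A i → E u v → False := by
    intro i u v huA huB hvA hE
    rcases harc u v hE with ⟨l, hul, hvl⟩ | ⟨l, j, hjl, hul, hvj⟩
    · have h1 : (l : ℕ) < i := by
        by_contra h
        exact huB (mem_suff.mpr ⟨l, le_of_not_gt h, hul⟩)
      have h2 : i ≤ (l : ℕ) := by
        by_contra h
        exact hvA (mem_pref.mpr ⟨l, lt_of_not_ge h, hvl⟩)
      omega
    · have h1 : (l : ℕ) < i := by
        by_contra h
        exact huB (mem_suff.mpr ⟨l, le_of_not_gt h, hul⟩)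
      have h2 : i ≤ (j : ℕ) := by
        by_contra h
        exact hvA (mem_pref.mpr ⟨j, lt_of_not_ge h, hvj⟩)
      have h3 : (j : ℕ) < (l : ℕ) := hjl
      omega
  have hPr : (X ∩ (A r \ B r)).Nonempty := by
    refine ⟨v0, hv0, mem_pref.mpr ⟨j0, j0.2, hj0⟩, ?_⟩
    intro h
    obtain ⟨j, hj, -⟩ := mem_suff.mp h
    exact absurd j.2 (not_lt.mpr hj)
  have hex : ∃ i, (X ∩ (A i \ B i)).Nonempty := ⟨r, hPr⟩
  set α := Nat.find hex with hαdef
  obtain ⟨p, hpX, hpA, hpB⟩ := Nat.find_spec hex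
  have hαmin : ∀ m, m < α → ¬ (X ∩ (A m \ B m)).Nonempty := fun m hm => Nat.find_min hex hm
  have hα1 : 1 ≤ α := by
    obtain ⟨j, hj, -⟩ := mem_pref.mp hpA
    omega
  have hαr : α ≤ r := Nat.find_le hPr
  set w : Fin r := ⟨α - 1, by omega⟩ with hwdef
  have hMem : ∀ (a b : Fin r) (x : V), (a : ℕ) < α - 1 → α - 1 < (b : ℕ) →
      x ∈ Bs a → x ∈ Bs b → x ∈ Bs w := by
    intro a b x ha hb' hxa hxb
    exact hmono a w b (by simpa [Fin.lt_def, hwdef] using ha)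
      (by simpa [Fin.lt_def, hwdef] using hb') ⟨hxa, hxb⟩
  have keyXA : X ∩ A α ⊆ Bs w := by
    rintro x ⟨hxX, hxA⟩
    obtain ⟨j, hjα, hxj⟩ := mem_pref.mp hxA
    rcases eq_or_lt_of_le (show (j : ℕ) ≤ α - 1 by omega) with heq | hlt
    · have : j = w := Fin.ext (by simpa [hwdef] using heq)
      exact this ▸ hxj
    · have hxA' : x ∈ A (α - 1) := mem_pref.mpr ⟨j, hlt, hxj⟩
      have hxB' : x ∈ B (α - 1) := by
        by_contra h
        exact hαmin (α - 1) (by omega) ⟨x, hxX, hxA', h⟩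
      obtain ⟨b, hb1, hxb⟩ := mem_suff.mp hxB'
      rcases eq_or_lt_of_le hb1 with heq | hlt2
      · have : b = w := Fin.ext (by simpa [hwdef] using heq.symm)
        exact this ▸ hxb
      · exact hMem j b x hlt hlt2 hxj hxb
  have keysep : A α ∩ B α ⊆ Bs w := by
    rintro x ⟨hxA, hxB⟩
    obtain ⟨a, haα, hxa⟩ := mem_pref.mp hxA
    obtain ⟨b, hbα, hxb⟩ := mem_suff.mp hxB
    rcases eq_or_lt_of_le (show (a : ℕ) ≤ α - 1 by omega) with heq | hlt
    · have : a = w := Fin.ext (by simpa [hwdef] using heq)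
      exact this ▸ hxa
    · exact hMem a b x hlt (by omega) hxa hxb
  -- cardinal bookkeeping
  set XA := X ∩ A α with hXAdef
  set sep := A α ∩ B α with hsepdef
  set Q := X \ A α with hQdef
  have hU : (XA ∪ sep).ncard ≤ k + 1 :=
    le_trans (Set.ncard_le_ncard (Set.union_subset keyXA keysep) (hfin _)) (hb w)
  have ha' : XA.ncard ≤ k + 1 :=
    le_trans (Set.ncard_le_ncard keyXA (hfin _)) (hb w)
  have hps : p ∉ sep := fun h => hpB h.2
  have hpXA : p ∈ XA := ⟨hpX, hpA⟩
  have hinter : XA ∩ sep = sep ∩ X := by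
    ext x
    constructor
    · rintro ⟨⟨h1, h2⟩, h3⟩
      exact ⟨h3, h1⟩
    · rintro ⟨h3, h1⟩
      exact ⟨⟨h1, h3.1⟩, h3⟩
  have hcard1 : (XA ∪ sep).ncard + (sep ∩ X).ncard = XA.ncard + sep.ncard := by
    rw [← hinter]
    exact Set.ncard_union_add_ncard_inter _ _ (hfin _) (hfin _)
  have hcard2 : (sep ∩ X).ncard + 1 ≤ XA.ncard := by
    have hsub : insert p (sep ∩ X) ⊆ XA := by
      rintro x hx
      rcases Set.mem_insert_iff.mp hx with rfl | ⟨h1, h2⟩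
      · exact hpXA
      · exact ⟨h2, h1.1⟩
    have h := Set.ncard_le_ncard hsub (hfin _)
    rwa [Set.ncard_insert_of_notMem (fun h' => hps h'.1) (hfin _)] at h
  have hcard3 : XA.ncard + Q.ncard = X.ncard :=
    Set.ncard_inter_add_ncard_diff_eq_ncard X (A α) (hfin _)
  have hm : 2 * (sep.ncard + k) + 1 ≤ Q.ncard := by omega
  -- pigeonhole: a vertex of Q with many outneighbours inside Q
  set Qf : Finset V := (hfin Q).toFinset with hQfdef
  have hQf : ∀ x, x ∈ Qf ↔ x ∈ Q := fun x => Set.Finite.mem_toFinset _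
  have hQcard : Qf.card = Q.ncard := (Set.ncard_eq_toFinset_card Q (hfin Q)).symm
  set f : V → ℕ := fun q => (Qf.filter (fun z => E q z)).card with hfdef
  have hsum2 : ∑ q ∈ Qf, (Qf.filter (fun z => E z q)).card = ∑ q ∈ Qf, f q := by
    simp only [hfdef, Finset.card_filter]
    exact Finset.sum_comm
  have hlow : Qf.card * (Qf.card - 1) ≤ 2 * ∑ q ∈ Qf, f q := by
    have h1 : ∀ q ∈ Qf, Qf.card - 1 ≤ f q + (Qf.filter (fun z => E z q)).card := by
      intro q hq
      have hsub : Qf.erase q ⊆ Qf.filter (fun z => E q z) ∪ Qf.filter (fun z => E z q) := by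
        intro z hz
        obtain ⟨hzq, hzQ⟩ := Finset.mem_erase.mp hz
        rcases hT.2 q z (Ne.symm hzq) with h | h
        · exact Finset.mem_union_left _ (Finset.mem_filter.mpr ⟨hzQ, h⟩)
        · exact Finset.mem_union_right _ (Finset.mem_filter.mpr ⟨hzQ, h⟩)
      calc Qf.card - 1 = (Qf.erase q).card := (Finset.card_erase_of_mem hq).symm
        _ ≤ _ := le_trans (Finset.card_le_card hsub) (Finset.card_union_le _ _)
    calc Qf.card * (Qf.card - 1) = ∑ _q ∈ Qf, (Qf.card - 1) := by
          rw [Finset.sum_const, smul_eq_mul]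
      _ ≤ ∑ q ∈ Qf, (f q + (Qf.filter (fun z => E z q)).card) := Finset.sum_le_sum h1
      _ = ∑ q ∈ Qf, f q + ∑ q ∈ Qf, (Qf.filter (fun z => E z q)).card :=
          Finset.sum_add_distrib
      _ = 2 * ∑ q ∈ Qf, f q := by rw [hsum2]; ring
  have hQfne : Qf.Nonempty := by
    rw [← Finset.card_pos, hQcard]; omega
  obtain ⟨q0, hq0, hq0max⟩ := Finset.exists_max_image Qf f hQfne
  have hSle : ∑ q ∈ Qf, f q ≤ Qf.card * f q0 := by
    have h := Finset.sum_le_card_nsmul Qf f (f q0) hq0max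
    simpa [smul_eq_mul] using h
  have hfq0 : sep.ncard + k ≤ f q0 := by
    have h2 : Qf.card * (Qf.card - 1) ≤ Qf.card * (2 * f q0) := by
      calc Qf.card * (Qf.card - 1) ≤ 2 * ∑ q ∈ Qf, f q := hlow
        _ ≤ 2 * (Qf.card * f q0) := Nat.mul_le_mul_left 2 hSle
        _ = Qf.card * (2 * f q0) := by ring
    have h3 : Qf.card - 1 ≤ 2 * f q0 :=
      Nat.le_of_mul_le_mul_left h2 (by rw [hQcard]; omega)
    rw [hQcard] at h3
    omega
  -- degree bounds
  have hq0Q : q0 ∈ Q := (hQf q0).mp hq0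
  have hq0X : q0 ∈ X := hq0Q.1
  have hq0A : q0 ∉ A α := hq0Q.2
  have hout : (A α \ B α) ∪ (↑(Qf.filter (fun z => E q0 z)) : Set V) ⊆ {z | E q0 z} := by
    rintro z (⟨hzA, hzB⟩ | hz)
    · have hne : q0 ≠ z := fun h => hq0A (h ▸ hzA)
      rcases hT.2 q0 z hne with h | h
      · exact h
      · exact absurd h (fun hE => hsep α z q0 hzA hzB hq0A hE)
    · exact (Finset.mem_filter.mp (Finset.mem_coe.mp hz)).2
  have hdisj : Disjoint (A α \ B α) (↑(Qf.filter (fun z => E q0 z)) : Set V) := by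
    rw [Set.disjoint_left]
    rintro z ⟨hzA, -⟩ hz
    have hzQ : z ∈ Q := (hQf z).mp (Finset.filter_subset _ _ (Finset.mem_coe.mp hz))
    exact hzQ.2 hzA
  have hcard4 : (A α \ B α).ncard + f q0 ≤ outdeg E q0 := by
    have h := Set.ncard_le_ncard hout (hfin _)
    rw [Set.ncard_union_eq hdisj (hfin _) (hfin _), Set.ncard_coe_finset] at h
    exact h
  have hAB : A α \ B α = A α \ sep := (Set.diff_self_inter).symm
  have hcard5 : (A α \ sep).ncard + sep.ncard = (A α).ncard :=
    Set.ncard_diff_add_ncard_of_subset Set.inter_subset_left (hfin _)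
  have hcard6 : outdeg E p + 1 ≤ (A α).ncard := by
    have hsub : insert p {z | E p z} ⊆ A α := by
      rintro z hz
      rcases Set.mem_insert_iff.mp hz with rfl | hz
      · exact hpA
      · by_contra hzA
        exact hsep α p z hpA hpB hzA hz
    have h := Set.ncard_le_ncard hsub (hfin _)
    rw [Set.ncard_insert_of_notMem (show p ∉ {z | E p z} from hT.1 p) (hfin _)] at h
    exact h
  have htangle : outdeg E q0 ≤ outdeg E p + k := htang q0 hq0X p hpX
  rw [hAB] at hcard4
  omega

/-- A semi-complete digraph containing a `(5k+2, k)`-degree tangle has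
pathwidth greater than `k`. -/
theorem stmt_6 {V : Type*} [Fintype V] (E : V → V → Prop) (hT : SemiComplete E)
    (k : ℕ) (X : Set V) (hX : DegreeTangle E (5 * k + 2) k X) :
    k < pathwidth E := by
  classical
  have hne : {p | ∃ (r : ℕ) (Bs : Fin r → Set V), IsPathDecomp E Bs ∧
      ∀ i, (Bs i).ncard - 1 ≤ p}.Nonempty := by
    refine ⟨Fintype.card V, 1, fun _ => Set.univ, ⟨?_, ?_, ?_⟩, ?_⟩
    · exact Set.iUnion_const _
    · intro i j l _ _
      simp
    · intro u v _
      exact Or.inl ⟨0, trivial, trivial⟩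
    · intro _
      rw [Set.ncard_univ, Nat.card_eq_fintype_card]
      omega
  have hmem := Nat.sInf_mem hne
  by_contra hlt
  push_neg at hlt
  unfold pathwidth at hlt
  obtain ⟨r, Bs, hdec, hbnd⟩ := hmem
  refine core6 E hT k X hX Bs hdec fun i => ?_
  have h := hbnd i
  revert h hlt
  generalize sInf {p | ∃ (r : ℕ) (Bs : Fin r → Set V), IsPathDecomp E Bs ∧
      ∀ i, (Bs i).ncard - 1 ≤ p} = N
  intro hlt h
  omega
end

section
/- Let T be a semi-complete digraph, k a positive integer, and let X be a (26k, k)-degree tangle in T. Then X contains a (k,3)-short jungle, i.e., there is a subset Z ⊆ X with |Z| ≥ k such that for every v, w ∈ Z there exist k paths from v to w of length at most 3 that are pairwise internally vertex-disjoint. -/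
section Aux7

open Finset

variable {V : Type*}

/-- Double counting: in a semicomplete digraph, if every vertex of `M` has within-`M`
outdegree at most `c`, then `|M| ≤ 2c+1`. -/
lemma sc_count [Fintype V] [DecidableEq V] {E : V → V → Prop} [DecidableRel E]
    (hsc : ∀ v w : V, v ≠ w → E v w ∨ E w v) (M : Finset V) (c : ℕ)
    (h : ∀ b ∈ M, (M.filter fun u => E b u).card ≤ c) : M.card ≤ 2 * c + 1 := by
  rcases Nat.eq_zero_or_pos M.card with h0 | h0
  · omega
  have key : M.card * (M.card - 1) ≤ M.card * (2 * c) := by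
    have step1 : M.card * (M.card - 1) = ∑ b ∈ M, (M.erase b).card := by
      have : ∀ b ∈ M, (M.erase b).card = M.card - 1 :=
        fun b hb => Finset.card_erase_of_mem hb
      rw [Finset.sum_congr rfl this, Finset.sum_const, smul_eq_mul]
    have step2 : ∑ b ∈ M, (M.erase b).card ≤
        ∑ b ∈ M, ((M.filter fun u => E b u).card + (M.filter fun u => E u b).card) := by
      refine Finset.sum_le_sum fun b hb => ?_
      have hsub : M.erase b ⊆ (M.filter fun u => E b u) ∪ (M.filter fun u => E u b) := by
        intro u hu
        rcases Finset.mem_erase.mp hu with ⟨hne, huM⟩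
        rcases hsc b u (Ne.symm hne) with h' | h'
        · exact Finset.mem_union_left _ (Finset.mem_filter.mpr ⟨huM, h'⟩)
        · exact Finset.mem_union_right _ (Finset.mem_filter.mpr ⟨huM, h'⟩)
      exact (Finset.card_le_card hsub).trans (Finset.card_union_le _ _)
    have swap : ∑ b ∈ M, (M.filter fun u => E u b).card
        = ∑ b ∈ M, (M.filter fun u => E b u).card := by
      simp only [Finset.card_filter]
      exact Finset.sum_comm
    have step3 : ∑ b ∈ M, (M.filter fun u => E b u).card ≤ M.card * c := by
      calc ∑ b ∈ M, (M.filter fun u => E b u).card ≤ ∑ _b ∈ M, c :=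
            Finset.sum_le_sum h
        _ = M.card * c := by rw [Finset.sum_const, smul_eq_mul]
    calc M.card * (M.card - 1) ≤
        ∑ b ∈ M, ((M.filter fun u => E b u).card + (M.filter fun u => E u b).card) :=
          step1 ▸ step2
      _ = ∑ b ∈ M, (M.filter fun u => E b u).card
          + ∑ b ∈ M, (M.filter fun u => E u b).card := Finset.sum_add_distrib
      _ = 2 * ∑ b ∈ M, (M.filter fun u => E b u).card := by rw [swap]; ring
      _ ≤ 2 * (M.card * c) := by omega
      _ = M.card * (2 * c) := by ring
  have := Nat.le_of_mul_le_mul_left key h0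
  omega

lemma outdeg_eq_card [Fintype V] {E : V → V → Prop} [DecidableRel E] (v : V) :
    outdeg E v = (Finset.univ.filter fun u => E v u).card := by
  rw [outdeg, show {w | E v w} = ↑(Finset.univ.filter fun u => E v u) by ext u; simp]
  exact Set.ncard_coe_finset _

/-- The key pair lemma: a short path from `v` to `w` internally avoiding `U`. -/
lemma pair_lemma [Fintype V] [DecidableEq V] {E : V → V → Prop} [DecidableRel E]
    (hT : SemiComplete E) {k : ℕ} (hk : 0 < k) {Xf : Finset V}
    (htan : ∀ v ∈ Xf, ∀ w ∈ Xf, (Finset.univ.filter fun u => E v u).card ≤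
      (Finset.univ.filter fun u => E w u).card + k)
    {v w : V} (hv : v ∈ Xf) (hvw : v ≠ w)
    (hw9 : 9 * k + 1 ≤ (Xf.filter fun u => E u w).card)
    (U : Finset V) (hU : U.card + 2 ≤ 2 * k) :
    ∃ p : List V, PathFrom E v w p ∧ pathLen p ≤ 3 ∧
      (internals p).length ≤ 2 ∧ internals p ≠ [] ∧ ∀ z ∈ internals p, z ∉ U := by
  set F : Finset V := insert v (insert w U) with hF
  have hFcard : F.card ≤ 2 * k := by
    rw [hF]
    have h1 := Finset.card_insert_le v (insert w U)
    have h2 := Finset.card_insert_le w U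
    omega
  have hvF : v ∈ F := by simp [hF]
  have hwF : w ∈ F := by simp [hF]
  set A : Finset V := (Finset.univ.filter fun u => E v u) \ F with hA
  set B : Finset V := (Finset.univ.filter fun u => E u w) \ F with hB
  have hmemA : ∀ x, x ∈ A ↔ E v x ∧ x ∉ F := by
    intro x; simp [hA]
  have hmemB : ∀ x, x ∈ B ↔ E x w ∧ x ∉ F := by
    intro x; simp [hB]
  have hnotF : ∀ x, x ∉ F → x ≠ v ∧ x ≠ w ∧ x ∉ U := by
    intro x hx
    simp only [hF, Finset.mem_insert] at hx
    push_neg at hx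
    exact hx
  by_cases h1 : ∃ x, x ∈ A ∧ x ∈ B
  · obtain ⟨x, hxA, hxB⟩ := h1
    have hvx : E v x := ((hmemA x).mp hxA).1
    have hxw : E x w := ((hmemB x).mp hxB).1
    obtain ⟨hx1, hx2, hx3⟩ := hnotF x ((hmemA x).mp hxA).2
    refine ⟨[v, x, w], ⟨⟨by simp, ?_, ?_⟩, rfl, rfl⟩, by simp [pathLen], by simp [internals],
      by simp [internals], ?_⟩
    · simp only [List.nodup_cons, List.mem_cons, List.not_mem_nil, or_false,
        List.mem_singleton, List.nodup_nil, and_true]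
      push_neg
      exact ⟨⟨fun h => hx1 h.symm, hvw⟩, hx2, trivial⟩
    · simp [List.Chain', List.isChain_cons_cons, hvx, hxw]
    · intro z hz
      simp only [internals, List.drop_succ_cons, List.drop_zero, List.dropLast_cons₂,
        List.dropLast_singleton, List.mem_singleton] at hz
      subst hz; exact hx3
  · by_cases h2 : ∃ a, a ∈ A ∧ ∃ b, b ∈ B ∧ E a b
    · obtain ⟨a, haA, b, hbB, hab⟩ := h2
      have hva : E v a := ((hmemA a).mp haA).1
      have hbw : E b w := ((hmemB b).mp hbB).1
      obtain ⟨ha1, ha2, ha3⟩ := hnotF a ((hmemA a).mp haA).2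
      obtain ⟨hb1, hb2, hb3⟩ := hnotF b ((hmemB b).mp hbB).2
      have hanb : a ≠ b := by rintro rfl; exact hT.1 a hab
      refine ⟨[v, a, b, w], ⟨⟨by simp, ?_, ?_⟩, rfl, rfl⟩, by simp [pathLen],
        by simp [internals], by simp [internals], ?_⟩
      · simp only [List.nodup_cons, List.mem_cons, List.not_mem_nil, or_false,
          List.mem_singleton, List.nodup_nil, and_true]
        push_neg
        exact ⟨⟨fun h => ha1 h.symm, fun h => hb1 h.symm, hvw⟩, ⟨hanb, ha2⟩, hb2, trivial⟩
      · simp [List.Chain', List.isChain_cons_cons, hva, hab, hbw]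
      · intro z hz
        simp only [internals, List.drop_succ_cons, List.drop_zero, List.dropLast_cons₂,
          List.dropLast_singleton, List.mem_cons, List.mem_singleton, List.not_mem_nil,
          or_false] at hz
        rcases hz with rfl | rfl
        · exact ha3
        · exact hb3
    · exfalso
      set M : Finset V := Xf ∩ B with hM
      have hMB : M ⊆ B := Finset.inter_subset_right
      have hAB : ∀ x, x ∈ A → x ∉ B := fun x hxA hxB => h1 ⟨x, hxA, hxB⟩
      have hMcard : 7 * k + 1 ≤ M.card := by
        have hsub : Xf.filter (fun u => E u w) ⊆ M ∪ F := by
          intro u hu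
          rcases Finset.mem_filter.mp hu with ⟨huX, huw⟩
          by_cases hF' : u ∈ F
          · exact Finset.mem_union_right _ hF'
          · exact Finset.mem_union_left _
              (Finset.mem_inter.mpr ⟨huX, (hmemB u).mpr ⟨huw, hF'⟩⟩)
        have h3 := (Finset.card_le_card hsub).trans (Finset.card_union_le M F)
        omega
      have hdM : ∀ b ∈ M, (M.filter fun u => E b u).card ≤ 3 * k - 2 := by
        intro b hbM
        obtain ⟨hbX, hbB⟩ := Finset.mem_inter.mp hbM
        obtain ⟨hbw, hbF⟩ := (hmemB b).mp hbB
        obtain ⟨hbv, hbw2, hbU⟩ := hnotF b hbF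
        have hnotvb : ¬ E v b := fun h => hAB b ((hmemA b).mpr ⟨h, hbF⟩) hbB
        have hbv' : E b v := (hT.2 v b (Ne.symm hbv)).resolve_left hnotvb
        have hAb : ∀ a ∈ A, E b a := by
          intro a haA
          have hanb : ¬ E a b := fun h => h2 ⟨a, haA, b, hbB, h⟩
          have habne : a ≠ b := fun h => hAB b (h ▸ haA) hbB
          exact (hT.2 a b habne).resolve_left hanb
        set D : Finset V := M.filter fun u => E b u with hD
        have hvA : v ∉ A := fun h => ((hmemA v).mp h).2 hvF
        have hwA : w ∉ A := fun h => ((hmemA w).mp h).2 hwF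
        have hvD : v ∉ D := fun h => ((hmemB v).mp (hMB (Finset.mem_of_mem_filter v h))).2 hvF
        have hwD : w ∉ D := fun h => ((hmemB w).mp (hMB (Finset.mem_of_mem_filter w h))).2 hwF
        have hADdisj : Disjoint A D := Finset.disjoint_left.mpr
          (fun x hxA hxD => hAB x hxA (hMB (Finset.mem_of_mem_filter x hxD)))
        have hsub : insert v (insert w (A ∪ D)) ⊆ Finset.univ.filter fun u => E b u := by
          intro u hu
          simp only [Finset.mem_insert, Finset.mem_union] at hu
          rcases hu with rfl | rfl | huA | huD
          · exact Finset.mem_filter.mpr ⟨Finset.mem_univ _, hbv'⟩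
          · exact Finset.mem_filter.mpr ⟨Finset.mem_univ _, hbw⟩
          · exact Finset.mem_filter.mpr ⟨Finset.mem_univ _, hAb u huA⟩
          · exact Finset.mem_filter.mpr ⟨Finset.mem_univ _, (Finset.mem_filter.mp huD).2⟩
        have hvni : v ∉ insert w (A ∪ D) := by
          simp only [Finset.mem_insert, Finset.mem_union]
          push_neg
          exact ⟨hvw, hvA, hvD⟩
        have hwni : w ∉ A ∪ D := by
          simp only [Finset.mem_union]
          push_neg
          exact ⟨hwA, hwD⟩
        have hcard1 : (insert v (insert w (A ∪ D))).card = A.card + D.card + 2 := by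
          rw [Finset.card_insert_of_notMem hvni, Finset.card_insert_of_notMem hwni,
            Finset.card_union_of_disjoint hADdisj]
        have hdb : A.card + D.card + 2 ≤ (Finset.univ.filter fun u => E b u).card := by
          rw [← hcard1]; exact Finset.card_le_card hsub
        have hdv : (Finset.univ.filter fun u => E v u).card ≤ A.card + 2 * k := by
          have hsub2 : (Finset.univ.filter fun u => E v u) ⊆ A ∪ F := by
            intro u hu
            by_cases hF' : u ∈ F
            · exact Finset.mem_union_right _ hF'
            · exact Finset.mem_union_left _
                ((hmemA u).mpr ⟨(Finset.mem_filter.mp hu).2, hF'⟩)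
          have h4 := (Finset.card_le_card hsub2).trans (Finset.card_union_le A F)
          omega
        have htan' := htan b hbX v hv
        omega
      have hfin := sc_count hT.2 M (3 * k - 2) hdM
      omega

end Aux7

/-- A `(26k, k)`-degree tangle in a semi-complete digraph contains a
`(k, 3)`-short jungle. -/
theorem stmt_7 {V : Type*} [Fintype V] (E : V → V → Prop) (hT : SemiComplete E)
    (k : ℕ) (hk : 0 < k) (X : Set V) (hX : DegreeTangle E (26 * k) k X) :
    ∃ Z : Set V, Z ⊆ X ∧ ShortJungle E k 3 Z := by
  classical
  obtain ⟨hXcard, htan⟩ := hX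
  set Xf : Finset V := X.toFinset with hXf
  have hXfcard : 26 * k ≤ Xf.card := by
    rwa [Set.ncard_eq_toFinset_card'] at hXcard
  have htanf : ∀ a ∈ Xf, ∀ b ∈ Xf, (Finset.univ.filter fun u => E a u).card ≤
      (Finset.univ.filter fun u => E b u).card + k := by
    intro a ha b hb
    rw [← outdeg_eq_card, ← outdeg_eq_card]
    exact htan a (Set.mem_toFinset.mp ha) b (Set.mem_toFinset.mp hb)
  -- the bad set: vertices with few in-neighbours inside X
  set Sbad : Finset V := Xf.filter (fun w => (Xf.filter fun u => E u w).card ≤ 9 * k)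
    with hSbad
  have hSbadcard : Sbad.card ≤ 2 * (9 * k) + 1 := by
    refine sc_count (E := fun a b => E b a) (fun a b hab => (hT.2 a b hab).symm) Sbad (9 * k) ?_
    intro b hb
    have h1 : (Sbad.filter fun u => E u b).card ≤ (Xf.filter fun u => E u b).card :=
      Finset.card_le_card (Finset.filter_subset_filter _ (Finset.filter_subset _ _))
    exact h1.trans (Finset.mem_filter.mp hb).2
  set Zf : Finset V := Xf \ Sbad with hZf
  have hZfX : Zf ⊆ Xf := Finset.sdiff_subset
  have hZfcard : k ≤ Zf.card := by
    have h1 : Xf ⊆ Zf ∪ Sbad := by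
      intro x hx
      by_cases h : x ∈ Sbad
      · exact Finset.mem_union_right _ h
      · exact Finset.mem_union_left _ (Finset.mem_sdiff.mpr ⟨hx, h⟩)
    have h2 := (Finset.card_le_card h1).trans (Finset.card_union_le Zf Sbad)
    omega
  refine ⟨(↑Zf : Set V), ?_, ?_, ?_⟩
  · intro z hz
    exact Set.mem_toFinset.mp (hZfX (Finset.mem_coe.mp hz))
  · rwa [Set.ncard_coe_finset]
  · intro v hv w hw hvw
    have hvZ : v ∈ Zf := Finset.mem_coe.mp hv
    have hwZ : w ∈ Zf := Finset.mem_coe.mp hw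
    have hvX : v ∈ Xf := hZfX hvZ
    have hwX : w ∈ Xf := hZfX hwZ
    have hw9 : 9 * k + 1 ≤ (Xf.filter fun u => E u w).card := by
      have := (Finset.mem_sdiff.mp hwZ).2
      rw [hSbad, Finset.mem_filter] at this
      push_neg at this
      exact this hwX
    -- greedily build the paths
    have key : ∀ t : ℕ, t ≤ k → ∃ (L : List (List V)) (U : Finset V),
        L.length = t ∧ U.card ≤ 2 * t ∧
        (∀ p ∈ L, (PathFrom E v w p ∧ pathLen p ≤ 3) ∧ internals p ≠ [] ∧
          ∀ z ∈ internals p, z ∈ U) ∧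
        List.Pairwise (fun p q => ∀ z ∈ internals p, z ∉ internals q) L := by
      intro t
      induction t with
      | zero => exact fun _ => ⟨[], ∅, rfl, by simp, by simp, List.Pairwise.nil⟩
      | succ t ih =>
        intro ht
        obtain ⟨L, U, hlen, hUcard, hprops, hpair⟩ := ih (Nat.le_of_succ_le ht)
        have hU2 : U.card + 2 ≤ 2 * k := by omega
        obtain ⟨p, hp1, hp2, hp3, hp4, hp5⟩ := pair_lemma hT hk htanf hvX hvw hw9 U hU2
        refine ⟨p :: L, U ∪ (internals p).toFinset, by simp [hlen], ?_, ?_, ?_⟩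
        · have hc1 : (internals p).toFinset.card ≤ 2 :=
            le_trans (List.toFinset_card_le _) hp3
          have hc2 := Finset.card_union_le U (internals p).toFinset
          omega
        · intro q hq
          rcases List.mem_cons.mp hq with rfl | hqL
          · exact ⟨⟨hp1, hp2⟩, hp4,
              fun z hz => Finset.mem_union_right _ (List.mem_toFinset.mpr hz)⟩
          · obtain ⟨hA, hB, hC⟩ := hprops q hqL
            exact ⟨hA, hB, fun z hz => Finset.mem_union_left _ (hC z hz)⟩
        · refine List.Pairwise.cons ?_ hpair
          intro q hqL z hzp hzq
          exact hp5 z hzp ((hprops q hqL).2.2 z hzq)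
    obtain ⟨L, U, hlen, -, hprops, hpair⟩ := key k le_rfl
    have hget := List.pairwise_iff_get.mp hpair
    set P : Fin k → List V := fun i => L.get ⟨i.val, by rw [hlen]; exact i.isLt⟩ with hP
    have hPmem : ∀ i, P i ∈ L := fun i => List.get_mem L _
    have hdisj : ∀ i j : Fin k, i ≠ j → ∀ z ∈ internals (P i), z ∉ internals (P j) := by
      intro i j hij z hzi hzj
      rcases lt_trichotomy i.val j.val with h | h | h
      · exact hget ⟨i.val, _⟩ ⟨j.val, _⟩ h z hzi hzj
      · exact hij (Fin.ext h)
      · exact hget ⟨j.val, _⟩ ⟨i.val, _⟩ h z hzj hzi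
    refine ⟨P, ?_, fun i => (hprops (P i) (hPmem i)).1, hdisj⟩
    intro i j hPij
    by_contra hij
    obtain ⟨z, hz⟩ := List.exists_mem_of_ne_nil _ ((hprops (P i) (hPmem i)).2.1)
    exact hdisj i j hij z hz (hPij ▸ hz)
end

section
/- Let T be a semi-complete digraph and k a nonnegative integer. If T contains a (k+1, k)-matching tangle, then the pathwidth of T is strictly greater than k. -/
private lemma mt_key {V : Type*} [Fintype V] (E : V → V → Prop) (hT : SemiComplete E)
    (k : ℕ) (X Y : Set V) (hXY : MatchingTangle E (k + 1) k X Y)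
    {r : ℕ} (Bs : Fin r → Set V) (hdec : IsPathDecomp E Bs)
    (hbag : ∀ i, (Bs i).ncard ≤ k + 1) : False := by
  classical
  obtain ⟨hdisj, hXc, hYc, ⟨f, hbij, harc⟩, hdeg⟩ := hXY
  obtain ⟨hcov, hmono, harcs⟩ := hdec
  set F : V → Finset (Fin r) := fun v => Finset.univ.filter (fun i => v ∈ Bs i) with hF
  have hFmem : ∀ v i, i ∈ F v ↔ v ∈ Bs i := by intro v i; simp [hF]
  have hFne : ∀ v, (F v).Nonempty := by
    intro v
    have hv : v ∈ ⋃ i, Bs i := hcov ▸ Set.mem_univ v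
    obtain ⟨i, hi⟩ := Set.mem_iUnion.1 hv
    exact ⟨i, (hFmem v i).2 hi⟩
  set sv : V → Fin r := fun v => (F v).min' (hFne v) with hsv
  set tv : V → Fin r := fun v => (F v).max' (hFne v) with htv
  have hsmem : ∀ v, v ∈ Bs (sv v) := fun v => (hFmem v _).1 (Finset.min'_mem _ _)
  have htmem : ∀ v, v ∈ Bs (tv v) := fun v => (hFmem v _).1 (Finset.max'_mem _ _)
  have hst : ∀ v, sv v ≤ tv v := fun v => Finset.min'_le _ _ (Finset.max'_mem _ _)
  have hmemI : ∀ v (j : Fin r), sv v ≤ j → j ≤ tv v → v ∈ Bs j := by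
    intro v j h1 h2
    rcases eq_or_lt_of_le h1 with h1' | h1'
    · exact h1' ▸ hsmem v
    rcases eq_or_lt_of_le h2 with h2' | h2'
    · exact h2' ▸ htmem v
    exact hmono _ _ _ h1' h2' ⟨hsmem v, htmem v⟩
  have harcI : ∀ u w, E u w → sv w ≤ tv u := by
    intro u w h
    rcases harcs u w h with ⟨i, hu, hw⟩ | ⟨i, j, hji, hu, hw⟩
    · exact le_trans (Finset.min'_le _ _ ((hFmem w i).2 hw))
        (Finset.le_max' _ _ ((hFmem u i).2 hu))
    · exact le_trans (Finset.min'_le _ _ ((hFmem w j).2 hw))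
        (le_trans hji.le (Finset.le_max' _ _ ((hFmem u i).2 hu)))
  -- outdegree bounds
  have hupper : ∀ v, outdeg E v + 1 ≤ {u | sv u ≤ tv v}.ncard := by
    intro v
    have hsub : insert v {w | E v w} ⊆ {u | sv u ≤ tv v} := by
      intro u hu
      rcases Set.mem_insert_iff.1 hu with rfl | hu
      · exact hst u
      · exact harcI v u hu
    have hcard : (insert v {w | E v w}).ncard = outdeg E v + 1 :=
      Set.ncard_insert_of_notMem (hT.1 v) (Set.toFinite _)
    calc outdeg E v + 1 = (insert v {w | E v w}).ncard := hcard.symm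
      _ ≤ _ := Set.ncard_le_ncard hsub (Set.toFinite _)
  have hlower : ∀ v, {u | tv u < sv v}.ncard ≤ outdeg E v := by
    intro v
    refine Set.ncard_le_ncard ?_ (Set.toFinite _)
    intro u hu
    have hne : u ≠ v := by
      intro h; subst h; exact absurd (hst u) (not_le.2 hu)
    rcases hT.2 v u (Ne.symm hne) with h | h
    · exact h
    · exact absurd (harcI u v h) (not_le.2 hu)
  -- master counting lemma
  have hC : ∀ x ∈ X, ∀ y ∈ Y, k + 2 ≤ {u | sv u ≤ tv y ∧ sv x ≤ tv u}.ncard := by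
    intro x hx y hy
    have hsub : {u | sv u ≤ tv y} ⊆
        {u | tv u < sv x} ∪ {u | sv u ≤ tv y ∧ sv x ≤ tv u} := by
      intro u hu
      rcases lt_or_ge (tv u) (sv x) with h | h
      · exact Or.inl h
      · exact Or.inr ⟨hu, h⟩
    have h1 : outdeg E y + 1 ≤
        ({u | tv u < sv x} ∪ {u | sv u ≤ tv y ∧ sv x ≤ tv u}).ncard :=
      le_trans (hupper y) (Set.ncard_le_ncard hsub (Set.toFinite _))
    have h2 := Set.ncard_union_le {u | tv u < sv x} {u | sv u ≤ tv y ∧ sv x ≤ tv u}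
    have h3 := hlower x
    have h4 := hdeg x hx y hy
    omega
  -- extremal choices
  have hXne : X.Nonempty :=
    Set.nonempty_of_ncard_ne_zero (by rw [hXc]; exact Nat.succ_ne_zero k)
  have hYne : Y.Nonempty :=
    Set.nonempty_of_ncard_ne_zero (by rw [hYc]; exact Nat.succ_ne_zero k)
  have hXfin := Set.toFinite X
  have hYfin := Set.toFinite Y
  obtain ⟨xs, hxs, hxsmax⟩ := Finset.exists_max_image hXfin.toFinset sv
    ((Set.Finite.toFinset_nonempty hXfin).2 hXne)
  obtain ⟨y1, hy1, hy1min⟩ := Finset.exists_min_image hYfin.toFinset tv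
    ((Set.Finite.toFinset_nonempty hYfin).2 hYne)
  have hxsX : xs ∈ X := hXfin.mem_toFinset.1 hxs
  have hy1Y : y1 ∈ Y := hYfin.mem_toFinset.1 hy1
  have hxsmax' : ∀ x ∈ X, sv x ≤ sv xs := fun x hx => hxsmax x (hXfin.mem_toFinset.2 hx)
  have hy1min' : ∀ y ∈ Y, tv y1 ≤ tv y := fun y hy => hy1min y (hYfin.mem_toFinset.2 hy)
  have hσβ : sv xs ≤ tv y1 := by
    by_contra h
    push_neg at h
    have hsub : {u | sv u ≤ tv y1 ∧ sv xs ≤ tv u} ⊆ Bs (tv y1) := by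
      rintro u ⟨h1, h2⟩
      exact hmemI u _ h1 (le_trans h.le h2)
    have h5 := Set.ncard_le_ncard hsub (Set.toFinite _)
    have h6 := hC xs hxsX y1 hy1Y
    have h7 := hbag (tv y1)
    omega
  -- preimage function for the matching
  have hgex : ∀ y ∈ Y, ∃ x, x ∈ X ∧ f x = y := by
    intro y hy
    obtain ⟨x, hx, hfx⟩ := hbij.2.2 hy
    exact ⟨x, hx, hfx⟩
  set g : V → V := fun y => if h : y ∈ Y then (hgex y h).choose else y with hg
  have hgX : ∀ y ∈ Y, g y ∈ X := by
    intro y hy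
    simp only [hg, dif_pos hy]
    exact (hgex y hy).choose_spec.1
  have hgf : ∀ y ∈ Y, f (g y) = y := by
    intro y hy
    simp only [hg, dif_pos hy]
    exact (hgex y hy).choose_spec.2
  have hsfg : ∀ y ∈ Y, sv y ≤ tv (g y) := by
    intro y hy
    have h := harcI (g y) (f (g y)) (harc (g y) (hgX y hy))
    rwa [hgf y hy] at h
  -- bag identification
  have hHp : ∀ p : Fin r, sv xs ≤ p → p ≤ tv y1 →
      (fun y => if sv y ≤ p then y else g y) '' Y = Bs p := by
    intro p hp1 hp2
    have hsub : (fun y => if sv y ≤ p then y else g y) '' Y ⊆ Bs p := by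
      rintro _ ⟨y, hy, rfl⟩
      by_cases hc : sv y ≤ p
      · simp only [if_pos hc]
        exact hmemI y p hc (le_trans hp2 (hy1min' y hy))
      · simp only [if_neg hc]
        refine hmemI _ p (le_trans (hxsmax' _ (hgX y hy)) hp1) ?_
        exact le_trans (le_of_lt (not_le.1 hc)) (hsfg y hy)
    have hinj : Set.InjOn (fun y => if sv y ≤ p then y else g y) Y := by
      intro a ha b hb hab
      simp only at hab
      by_cases hca : sv a ≤ p <;> by_cases hcb : sv b ≤ p
      · rwa [if_pos hca, if_pos hcb] at hab
      · rw [if_pos hca, if_neg hcb] at hab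
        have hXa : a ∈ X := by rw [hab]; exact hgX b hb
        exact absurd ha (Set.disjoint_left.1 hdisj hXa)
      · rw [if_neg hca, if_pos hcb] at hab
        have hXb : b ∈ X := by rw [← hab]; exact hgX a ha
        exact absurd hb (Set.disjoint_left.1 hdisj hXb)
      · rw [if_neg hca, if_neg hcb] at hab
        have h := congrArg f hab
        rwa [hgf a ha, hgf b hb] at h
    have hcard : ((fun y => if sv y ≤ p then y else g y) '' Y).ncard = k + 1 := by
      rw [Set.ncard_image_of_injOn hinj, hYc]
    exact Set.eq_of_subset_of_ncard_le hsub (by rw [hcard]; exact hbag p) (Set.toFinite _)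
  -- find y2 with sv xs < sv y2 ≤ tv y1
  have hy2ex : ∃ y ∈ Y, sv xs < sv y ∧ sv y ≤ tv y1 := by
    by_contra hcon
    push_neg at hcon
    have hMsub : {u | sv u ≤ tv y1 ∧ sv xs ≤ tv u} ⊆
        {y ∈ Y | sv y ≤ sv xs} ∪ {x ∈ X | tv y1 < sv (f x)} := by
      rintro v ⟨hv1, hv2⟩
      have hp1 : sv xs ≤ max (sv xs) (sv v) := le_max_left _ _
      have hp2 : max (sv xs) (sv v) ≤ tv y1 := max_le hσβ hv1
      have hvmem : v ∈ Bs (max (sv xs) (sv v)) :=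
        hmemI v _ (le_max_right _ _) (max_le hv2 (hst v))
      rw [← hHp _ hp1 hp2] at hvmem
      obtain ⟨y, hy, heq⟩ := hvmem
      replace heq : (if sv y ≤ max (sv xs) (sv v) then y else g y) = v := heq
      by_cases hc : sv y ≤ max (sv xs) (sv v)
      · rw [if_pos hc] at heq
        subst heq
        left
        refine ⟨hy, ?_⟩
        by_contra hle
        push_neg at hle
        exact absurd (le_trans hc hp2) (not_le.2 (hcon y hy hle))
      · rw [if_neg hc] at heq
        right
        have hsy : sv xs < sv y := lt_of_le_of_lt hp1 (not_le.1 hc)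
        refine ⟨heq ▸ hgX y hy, ?_⟩
        rw [← heq, hgf y hy]
        exact hcon y hy hsy
    have hdisj2 : Disjoint {y ∈ Y | sv y ≤ sv xs} (f '' {x ∈ X | tv y1 < sv (f x)}) := by
      rw [Set.disjoint_left]
      rintro a ⟨haY, hale⟩ ⟨x, ⟨hxX, hxlt⟩, rfl⟩
      exact absurd (le_trans hale hσβ) (not_le.2 hxlt)
    have himgsub : {y ∈ Y | sv y ≤ sv xs} ∪ f '' {x ∈ X | tv y1 < sv (f x)} ⊆ Y := by
      rintro a (⟨haY, _⟩ | ⟨x, ⟨hxX, _⟩, rfl⟩)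
      · exact haY
      · exact hbij.1 hxX
    have hinjf : Set.InjOn f {x ∈ X | tv y1 < sv (f x)} :=
      hbij.2.1.mono (fun x hx => hx.1)
    have hcount : {y ∈ Y | sv y ≤ sv xs}.ncard + {x ∈ X | tv y1 < sv (f x)}.ncard ≤ k + 1 := by
      have e1 : (f '' {x ∈ X | tv y1 < sv (f x)}).ncard = {x ∈ X | tv y1 < sv (f x)}.ncard :=
        Set.ncard_image_of_injOn hinjf
      have e2 : ({y ∈ Y | sv y ≤ sv xs} ∪ f '' {x ∈ X | tv y1 < sv (f x)}).ncard
          = {y ∈ Y | sv y ≤ sv xs}.ncard + (f '' {x ∈ X | tv y1 < sv (f x)}).ncard :=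
        Set.ncard_union_eq hdisj2 (Set.toFinite _) (Set.toFinite _)
      have e3 := Set.ncard_le_ncard himgsub (Set.toFinite _)
      rw [hYc] at e3
      omega
    have h8 := hC xs hxsX y1 hy1Y
    have h9 := Set.ncard_le_ncard hMsub (Set.toFinite _)
    have h10 := Set.ncard_union_le {y ∈ Y | sv y ≤ sv xs} {x ∈ X | tv y1 < sv (f x)}
    omega
  obtain ⟨y2, hy2Y, hy2l, hy2r⟩ := hy2ex
  have hx2mem : g y2 ∈ Bs (sv y2) :=
    hmemI _ _ (le_trans (hxsmax' _ (hgX y2 hy2Y)) hy2l.le) (hsfg y2 hy2Y)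
  rw [← hHp (sv y2) hy2l.le hy2r] at hx2mem
  obtain ⟨y, hyY, heq⟩ := hx2mem
  replace heq : (if sv y ≤ sv y2 then y else g y) = g y2 := heq
  by_cases hc : sv y ≤ sv y2
  · rw [if_pos hc] at heq
    have hXy : y ∈ X := by rw [heq]; exact hgX y2 hy2Y
    exact absurd hyY (Set.disjoint_left.1 hdisj hXy)
  · rw [if_neg hc] at heq
    have h := congrArg f heq
    rw [hgf y hyY, hgf y2 hy2Y] at h
    subst h
    exact hc le_rfl

/-- A semi-complete digraph containing a `(k+1, k)`-matching tangle has
pathwidth greater than `k`. -/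
theorem stmt_8 {V : Type*} [Fintype V] (E : V → V → Prop) (hT : SemiComplete E)
    (k : ℕ) (X Y : Set V) (hXY : MatchingTangle E (k + 1) k X Y) :
    k < pathwidth E := by
  classical
  have hSne : {p | ∃ (r : ℕ) (Bs : Fin r → Set V), IsPathDecomp E Bs ∧
      ∀ i, (Bs i).ncard - 1 ≤ p}.Nonempty := by
    refine ⟨Fintype.card V, 1, fun _ => Set.univ, ⟨?_, ?_, ?_⟩, ?_⟩
    · exact Set.iUnion_const Set.univ
    · intro i j l _ _ x _
      exact Set.mem_univ x
    · intro u v _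
      exact Or.inl ⟨0, Set.mem_univ u, Set.mem_univ v⟩
    · intro i
      have h := Set.ncard_univ V
      have h2 : Nat.card V = Fintype.card V := Nat.card_eq_fintype_card
      show (Set.univ : Set V).ncard - 1 ≤ Fintype.card V
      omega
  by_contra hle
  push_neg at hle
  have hmem := Nat.sInf_mem hSne
  simp only [Set.mem_setOf_eq] at hmem
  obtain ⟨r0, Bs0, hdec0, hbag0⟩ := hmem
  have hbag' : ∀ i, (Bs0 i).ncard ≤ k + 1 := by
    intro i
    have h1 : (Bs0 i).ncard - 1 ≤ k := le_trans (hbag0 i) hle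
    omega
  exact mt_key E hT k X Y hXY Bs0 hdec0 hbag'
end

section
/- Let T be a semi-complete digraph, k a positive integer, and let (X, Y) be a (5k, 3k)-matching tangle in T. Then Y contains a (k, 4)-short jungle, i.e., there is a subset Z ⊆ Y with |Z| ≥ k such that for every v, w ∈ Z there exist k paths from v to w of length at most 4 that are pairwise internally vertex-disjoint. -/
open Set

lemma ncard_sdiff_ge' {V : Type*} {s : Set V} (t : Set V) (hs : s.Finite) (ht : t.Finite) :
    s.ncard - t.ncard ≤ (s \ t).ncard := by
  have hsub : s ⊆ (s \ t) ∪ t := by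
    intro a ha; by_cases h : a ∈ t
    · exact Or.inr h
    · exact Or.inl ⟨ha, h⟩
  have h2 : s.ncard ≤ (s \ t).ncard + t.ncard :=
    (Set.ncard_le_ncard hsub ((hs.diff).union ht)).trans (Set.ncard_union_le _ _)
  omega

lemma exists_sdr' {V : Type*} : ∀ (n : ℕ) (A : Fin n → Set V),
    (∀ i, n ≤ (A i).ncard) →
    ∃ a : Fin n → V, Function.Injective a ∧ ∀ i, a i ∈ A i := by
  intro n
  induction n with
  | zero =>
    intro A _
    exact ⟨fun i => i.elim0, fun i => i.elim0, fun i => i.elim0⟩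
  | succ n ih =>
    intro A h
    obtain ⟨a0, ha0⟩ : (A 0).Nonempty :=
      Set.nonempty_of_ncard_ne_zero (by have := h 0; omega)
    obtain ⟨a', hinj, hmem⟩ := ih (fun i => A i.succ \ {a0}) (fun i => by
      have h1 := h i.succ
      have hfin : (A i.succ).Finite := by
        by_contra hinf
        rw [Set.Infinite.ncard (by exact hinf)] at h1; omega
      have h2 := ncard_sdiff_ge' (s := A i.succ) {a0} hfin (Set.finite_singleton a0)
      rw [Set.ncard_singleton] at h2
      show n ≤ (A i.succ \ {a0}).ncard
      omega)
    refine ⟨Fin.cases a0 a', ?_, ?_⟩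
    · intro i j hij
      rcases Fin.eq_zero_or_eq_succ i with rfl | ⟨i', rfl⟩ <;>
        rcases Fin.eq_zero_or_eq_succ j with rfl | ⟨j', rfl⟩
      · rfl
      · simp only [Fin.cases_zero, Fin.cases_succ] at hij
        exact absurd (by simp [← hij]) (hmem j').2
      · simp only [Fin.cases_zero, Fin.cases_succ] at hij
        exact absurd (by simp [hij]) (hmem i').2
      · simp only [Fin.cases_succ] at hij
        exact congrArg Fin.succ (hinj hij)
    · intro i
      rcases Fin.eq_zero_or_eq_succ i with rfl | ⟨i', rfl⟩
      · simpa using ha0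
      · simpa using (hmem i').1

lemma range_fin_ncard {V : Type*} {k : ℕ} (g : Fin k → V) : (Set.range g).ncard ≤ k := by
  rw [← Set.image_univ]
  refine le_trans (Set.ncard_image_le Set.finite_univ) ?_
  rw [Set.ncard_univ]
  simp [Nat.card_eq_fintype_card]

lemma tournament_bound' {V : Type*} [DecidableEq V] (E : V → V → Prop) [DecidableRel E]
    (m : Finset V) (htour : ∀ u ∈ m, ∀ v ∈ m, u ≠ v → E u v ∨ E v u) (k : ℕ)
    (hsmall : ∀ y ∈ m, (m.filter (fun u => E u y)).card ≤ k) :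
    m.card ≤ 2 * k + 1 := by
  classical
  set arcs := (m ×ˢ m).filter (fun p => E p.1 p.2 ∧ p.1 ≠ p.2) with harcs
  have hfib : ∀ p ∈ arcs, p.2 ∈ m := by
    intro p hp
    simp only [harcs, Finset.mem_filter, Finset.mem_product] at hp
    exact hp.1.2
  have hcard : arcs.card ≤ k * m.card := by
    rw [Finset.card_eq_sum_card_fiberwise hfib]
    calc ∑ y ∈ m, (arcs.filter fun p => p.2 = y).card
        ≤ ∑ y ∈ m, k := by
          refine Finset.sum_le_sum (fun y hy => ?_)
          refine le_trans (Finset.card_le_card_of_injOn Prod.fst ?_ ?_) (hsmall y hy)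
          · intro p hp
            simp only [harcs, Finset.mem_coe, Finset.mem_filter, Finset.mem_product] at hp ⊢
            exact ⟨hp.1.1.1, hp.2 ▸ hp.1.2.1⟩
          · intro p hp q hq hpq
            simp only [harcs, Finset.coe_filter, Set.mem_setOf_eq] at hp hq
            exact Prod.ext hpq (hp.2.trans hq.2.symm)
      _ = k * m.card := by rw [Finset.sum_const, smul_eq_mul, mul_comm]
  have hsub : m.offDiag ⊆ arcs ∪ arcs.image Prod.swap := by
    intro p hp
    rw [Finset.mem_offDiag] at hp
    obtain ⟨h1, h2, h3⟩ := hp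
    rcases htour p.1 h1 p.2 h2 h3 with h | h
    · exact Finset.mem_union_left _ (by simp [harcs, Finset.mem_product, h1, h2, h, h3])
    · refine Finset.mem_union_right _ (Finset.mem_image.mpr ⟨(p.2, p.1), ?_, rfl⟩)
      simp [harcs, Finset.mem_product, h1, h2, h, Ne.symm h3]
  have h1 := Finset.card_le_card hsub
  rw [Finset.offDiag_card] at h1
  have h2 := Finset.card_union_le arcs (arcs.image Prod.swap)
  have h3 := Finset.card_image_le (f := Prod.swap) (s := arcs)
  have key : m.card * m.card ≤ 2 * (k * m.card) + m.card := by omega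
  rcases Nat.eq_zero_or_pos m.card with h | h
  · omega
  · have : m.card * m.card ≤ m.card * (2 * k + 1) := by
      calc m.card * m.card ≤ 2 * (k * m.card) + m.card := key
        _ = m.card * (2 * k + 1) := by ring
    exact Nat.le_of_mul_le_mul_left this h



/-- If `(X, Y)` is a `(5k, 3k)`-matching tangle in a semi-complete digraph,
then `Y` contains a `(k, 4)`-short jungle. -/
theorem stmt_9 {V : Type*} [Fintype V] (E : V → V → Prop) (hT : SemiComplete E)
    (k : ℕ) (hk : 0 < k) (X Y : Set V) (hXY : MatchingTangle E (5 * k) (3 * k) X Y) :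
    ∃ Z : Set V, Z ⊆ Y ∧ ShortJungle E k 4 Z := by
  classical
  obtain ⟨hT1, hT2⟩ := hT
  obtain ⟨hdisj, hXcard, hYcard, ⟨f, hbij, hfE⟩, hdeg⟩ := hXY
  have hXnotY : ∀ u ∈ X, u ∉ Y := fun u hu => Set.disjoint_left.mp hdisj hu
  set Z : Set V := {y ∈ Y | k + 1 ≤ {u ∈ Y | E u y}.ncard} with hZdef
  have hZY : Z ⊆ Y := fun y hy => hy.1
  -- |Y \ Z| ≤ 2k+1
  have hMbound : (Y \ Z).ncard ≤ 2 * k + 1 := by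
    rw [Set.ncard_eq_toFinset_card']
    refine tournament_bound' E (Y \ Z).toFinset ?_ k ?_
    · intro u hu v hv huv
      exact hT2 u v huv
    · intro y hy
      rw [Set.mem_toFinset] at hy
      have hyn : ¬ (k + 1 ≤ {u ∈ Y | E u y}.ncard) := fun hc => hy.2 ⟨hy.1, hc⟩
      refine le_trans ?_ (by omega : {u ∈ Y | E u y}.ncard ≤ k)
      rw [Set.ncard_eq_toFinset_card']
      refine Finset.card_le_card ?_
      intro u hu
      rw [Finset.mem_filter, Set.mem_toFinset] at hu
      rw [Set.mem_toFinset]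
      exact ⟨hu.1.1, hu.2⟩
  have hZcard : k ≤ Z.ncard := by
    have hsplit : Y.ncard ≤ Z.ncard + (Y \ Z).ncard := by
      refine le_trans (Set.ncard_le_ncard (fun y hy => ?_) ((Set.toFinite Z).union (Set.toFinite _))) (Set.ncard_union_le _ _)
      by_cases h : y ∈ Z
      · exact Or.inl h
      · exact Or.inr ⟨hy, h⟩
    omega
  refine ⟨Z, hZY, hZcard, ?_⟩
  intro v hv w hw hvw
  have hvY : v ∈ Y := hZY hv
  have hwY : w ∈ Y := hZY hw
  -- choose b i : k distinct in-neighbours of w inside Y, avoiding v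
  have hwZ : k + 1 ≤ {u ∈ Y | E u w}.ncard := hw.2
  have hBcard : k ≤ ({u ∈ Y | E u w} \ {v}).ncard := by
    have h2 := ncard_sdiff_ge' (s := {u ∈ Y | E u w}) {v} (Set.toFinite _) (Set.finite_singleton v)
    rw [Set.ncard_singleton] at h2
    omega
  obtain ⟨b, hbinj, hbB⟩ := exists_sdr' k (fun _ => {u ∈ Y | E u w} \ {v}) (fun _ => hBcard)
  have hbY : ∀ i, b i ∈ Y := fun i => (hbB i).1.1
  have hbw : ∀ i, E (b i) w := fun i => (hbB i).1.2
  have hbv : ∀ i, b i ≠ v := fun i => by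
    have := (hbB i).2; simpa using this
  have hbnw : ∀ i, b i ≠ w := fun i => fun h => hT1 w (h ▸ hbw i)
  -- matched partners
  have hxex : ∀ i : Fin k, ∃ x, x ∈ X ∧ f x = b i := fun i => hbij.surjOn (hbY i)
  choose x hxX hfx using hxex
  have hxb : ∀ i, E (x i) (b i) := fun i => (hfx i) ▸ hfE (x i) (hxX i)
  have hxinj : Function.Injective x := fun i j hij => hbinj (by rw [← hfx i, ← hfx j, hij])
  -- the middle vertices a i
  have hRcard : (Set.range x ∪ Set.range b ∪ {w}).ncard ≤ 2 * k + 1 := by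
    refine le_trans (Set.ncard_union_le _ _) ?_
    have h1 := Set.ncard_union_le (Set.range x) (Set.range b)
    have h2 := range_fin_ncard x
    have h3 := range_fin_ncard b
    have h4 : ({w} : Set V).ncard = 1 := Set.ncard_singleton w
    omega
  obtain ⟨a, hainj, haA⟩ := exists_sdr' k
      (fun i => {u | E v u ∧ E u (x i)} \ (Set.range x ∪ Set.range b ∪ {w})) (fun i => by
    have hgap := hdeg (x i) (hxX i) v hvY
    unfold outdeg at hgap
    have hsub : {u | E v u} \ ({u | E (x i) u} ∪ (Set.range x ∪ Set.range b ∪ {w})) ⊆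
        {u | E v u ∧ E u (x i)} \ (Set.range x ∪ Set.range b ∪ {w}) := by
      rintro u ⟨hu1, hu2⟩
      simp only [Set.mem_union, Set.mem_setOf_eq, not_or] at hu2
      have hux : u ≠ x i := fun h => hu2.2.1.1 ⟨i, h.symm⟩
      have hEux : E u (x i) := by
        rcases hT2 u (x i) hux with h | h
        · exact h
        · exact absurd h hu2.1
      exact ⟨⟨hu1, hEux⟩, by
        simp only [Set.mem_union, not_or]
        exact hu2.2⟩
    have h1 := ncard_sdiff_ge' (s := {u | E v u})
      ({u | E (x i) u} ∪ (Set.range x ∪ Set.range b ∪ {w})) (Set.toFinite _) (Set.toFinite _)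
    have h2 := Set.ncard_union_le {u | E (x i) u} (Set.range x ∪ Set.range b ∪ {w})
    have h3 := Set.ncard_le_ncard hsub (Set.toFinite _)
    show k ≤ ({u | E v u ∧ E u (x i)} \ (Set.range x ∪ Set.range b ∪ {w})).ncard
    omega)
  have hva : ∀ i, E v (a i) := fun i => (haA i).1.1
  have hax : ∀ i, E (a i) (x i) := fun i => (haA i).1.2
  have hanR : ∀ i, a i ∉ Set.range x ∪ Set.range b ∪ {w} := fun i => (haA i).2
  have hanx : ∀ i j, a i ≠ x j := fun i j h => (hanR i) (Or.inl (Or.inl ⟨j, h.symm⟩))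
  have hanb : ∀ i j, a i ≠ b j := fun i j h => (hanR i) (Or.inl (Or.inr ⟨j, h.symm⟩))
  have hanw : ∀ i, a i ≠ w := fun i h => (hanR i) (Or.inr (by simp [h]))
  have hanv : ∀ i, a i ≠ v := fun i h => hT1 v (h ▸ hva i)
  have hxny : ∀ i, ∀ u ∈ Y, x i ≠ u := fun i u hu h => hXnotY (x i) (hxX i) (h ▸ hu)
  -- the paths
  refine ⟨fun i => [v, a i, x i, b i, w], ?_, ?_, ?_⟩
  · intro i j hij
    simp only [List.cons.injEq, and_true] at hij
    exact hainj hij.2.1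
  · intro i
    have hvai : v ≠ a i := Ne.symm (hanv i)
    have hvxi : v ≠ x i := Ne.symm (hxny i v hvY)
    have hvbi : v ≠ b i := Ne.symm (hbv i)
    have haxi : a i ≠ x i := hanx i i
    have habi : a i ≠ b i := hanb i i
    have hxbi : x i ≠ b i := hxny i (b i) (hbY i)
    have hxwi : x i ≠ w := hxny i w hwY
    refine ⟨⟨⟨by simp, ?_, ?_⟩, rfl, ?_⟩, ?_⟩
    · show ([v, a i, x i, b i, w]).Nodup
      simp [hvai, hvxi, hvbi, hvw, haxi, habi, hanw i, hxbi, hxwi, hbnw i]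
    · show List.Chain' E [v, a i, x i, b i, w]
      simp [List.Chain', List.isChain_cons_cons, hva i, hax i, hxb i, hbw i]
    · rfl
    · show pathLen [v, a i, x i, b i, w] ≤ 4
      norm_num [pathLen]
  · intro i j hij z hzi hzj
    have hzi' : z = a i ∨ z = x i ∨ z = b i := by
      simpa [internals] using hzi
    have hzj' : z = a j ∨ z = x j ∨ z = b j := by
      simpa [internals] using hzj
    rcases hzi' with rfl | rfl | rfl <;> rcases hzj' with h | h | h
    · exact hainj.ne hij h
    · exact hanx i j h
    · exact hanb i j h
    · exact (hanx j i) h.symm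
    · exact hxinj.ne hij h
    · exact hxny i (b j) (hbY j) h
    · exact (hanb j i) h.symm
    · exact (hxny j (b i) (hbY i)) h.symm
    · exact hbinj.ne hij h
end

section
/- Let T be a semi-complete digraph and k a nonnegative integer. If T contains an (m+1)-backward tangle, where m = 100k² + 22k + 1, then the cutwidth of T is strictly greater than k. -/
private lemma stmt10_ncard_prod {α β : Type*} (s : Set α) (t : Set β) :
    (s ×ˢ t).ncard = s.ncard * t.ncard := by
  rw [← Nat.card_coe_set_eq, Nat.card_congr (Equiv.Set.prod s t), Nat.card_prod,
    Nat.card_coe_set_eq, Nat.card_coe_set_eq]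

private lemma stmt10_main {V : Type*} [Fintype V] (E : V → V → Prop) (hT : SemiComplete E)
    (k : ℕ) (X Y : Set V)
    (hXY : BackwardTangle E ((100 * k ^ 2 + 22 * k + 1) + 1) X Y)
    (n : ℕ) (pos : V → ℕ)
    (hposlt : ∀ v, pos v < n)
    (hposinj : Function.Injective pos)
    (hpossurj : ∀ i, i < n → ∃ v, pos v = i)
    (hcut : ∀ m, m ≤ n →
      {p : V × V | pos p.1 < m ∧ ¬ (pos p.2 < m) ∧ E p.1 p.2}.ncard ≤ k) : False := by
  -- at most k forward arcs out of any vertex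
  have hfwd : ∀ v, {w | E v w ∧ pos v < pos w}.ncard ≤ k := by
    intro v
    have hinj : Function.Injective (fun w : V => ((v, w) : V × V)) := by
      intro a b h
      exact (Prod.mk.injEq _ _ _ _).mp h |>.2
    have hsub : (fun w : V => ((v, w) : V × V)) '' {w | E v w ∧ pos v < pos w} ⊆
        {p : V × V | pos p.1 < pos v + 1 ∧ ¬ (pos p.2 < pos v + 1) ∧ E p.1 p.2} := by
      rintro p ⟨w, ⟨hE, hltw⟩, rfl⟩
      exact show pos v < pos v + 1 ∧ ¬ (pos w < pos v + 1) ∧ E v w from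
        ⟨by omega, by omega, hE⟩
    calc {w | E v w ∧ pos v < pos w}.ncard
        = ((fun w : V => ((v, w) : V × V)) '' {w | E v w ∧ pos v < pos w}).ncard :=
          (Set.ncard_image_of_injective _ hinj).symm
      _ ≤ _ := Set.ncard_le_ncard hsub (Set.toFinite _)
      _ ≤ k := hcut (pos v + 1) (hposlt v)
  -- at most k missing arcs into any vertex from the left
  have hbwd : ∀ v, {u | E u v ∧ pos u < pos v}.ncard ≤ k := by
    intro v
    have hinj : Function.Injective (fun u : V => ((u, v) : V × V)) := by
      intro a b h
      exact (Prod.mk.injEq _ _ _ _).mp h |>.1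
    have hsub : (fun u : V => ((u, v) : V × V)) '' {u | E u v ∧ pos u < pos v} ⊆
        {p : V × V | pos p.1 < pos v ∧ ¬ (pos p.2 < pos v) ∧ E p.1 p.2} := by
      rintro p ⟨u, ⟨hE, hltu⟩, rfl⟩
      exact show pos u < pos v ∧ ¬ (pos v < pos v) ∧ E u v from ⟨hltu, by omega, hE⟩
    calc {u | E u v ∧ pos u < pos v}.ncard
        = ((fun u : V => ((u, v) : V × V)) '' {u | E u v ∧ pos u < pos v}).ncard :=
          (Set.ncard_image_of_injective _ hinj).symm
      _ ≤ _ := Set.ncard_le_ncard hsub (Set.toFinite _)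
      _ ≤ k := hcut (pos v) (le_of_lt (hposlt v))
  -- the number of vertices at positions < i is i
  have hL : ∀ i, i ≤ n → {u | pos u < i}.ncard = i := by
    intro i hi
    have himg : pos '' {u | pos u < i} = Set.Iio i := by
      ext m
      constructor
      · rintro ⟨u, hu, rfl⟩
        exact hu
      · intro hm
        obtain ⟨v, hv⟩ := hpossurj m (lt_of_lt_of_le hm hi)
        exact ⟨v, show pos v < i by rw [hv]; exact hm, hv⟩
    calc {u | pos u < i}.ncard = (pos '' {u | pos u < i}).ncard :=
          (Set.ncard_image_of_injective _ hposinj).symm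
      _ = (Set.Iio i).ncard := by rw [himg]
      _ = i := by rw [← Finset.coe_Iio, Set.ncard_coe_finset, Nat.card_Iio]
  -- outdegree lower bound: pos v ≤ d⁺(v) + k
  have hdeg_lb : ∀ v, pos v ≤ outdeg E v + k := by
    intro v
    have hsub : {u | pos u < pos v} ⊆ {w | E v w} ∪ {u | E u v ∧ pos u < pos v} := by
      intro u hu
      have hu' : pos u < pos v := hu
      have hne : v ≠ u := by
        intro h; subst h; exact lt_irrefl _ hu'
      rcases hT.2 v u hne with h | h
      · exact Or.inl h
      · exact Or.inr ⟨h, hu'⟩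
    calc pos v = {u | pos u < pos v}.ncard := (hL _ (le_of_lt (hposlt v))).symm
      _ ≤ ({w | E v w} ∪ {u | E u v ∧ pos u < pos v}).ncard :=
          Set.ncard_le_ncard hsub (Set.toFinite _)
      _ ≤ {w | E v w}.ncard + {u | E u v ∧ pos u < pos v}.ncard := Set.ncard_union_le _ _
      _ ≤ outdeg E v + k := by
          unfold outdeg; exact Nat.add_le_add le_rfl (hbwd v)
  -- outdegree upper bound: d⁺(v) ≤ pos v + k
  have hdeg_ub : ∀ v, outdeg E v ≤ pos v + k := by
    intro v
    have hsub : {w | E v w} ⊆ {u | pos u < pos v} ∪ {w | E v w ∧ pos v < pos w} := by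
      intro w hw
      have hw' : E v w := hw
      have hne : w ≠ v := by
        intro h; subst h; exact hT.1 w hw'
      have hpne : pos w ≠ pos v := fun h => hne (hposinj h)
      rcases lt_or_gt_of_ne hpne with h | h
      · exact Or.inl h
      · exact Or.inr ⟨hw', h⟩
    calc outdeg E v = {w | E v w}.ncard := rfl
      _ ≤ ({u | pos u < pos v} ∪ {w | E v w ∧ pos v < pos w}).ncard :=
          Set.ncard_le_ncard hsub (Set.toFinite _)
      _ ≤ {u | pos u < pos v}.ncard + {w | E v w ∧ pos v < pos w}.ncard := Set.ncard_union_le _ _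
      _ ≤ pos v + k := by
          rw [hL _ (le_of_lt (hposlt v))]
          exact Nat.add_le_add le_rfl (hfwd v)
  obtain ⟨hXuY, hdisj, hcard, hdegXY⟩ := hXY
  -- positions of X are at most 2k beyond positions of Y
  have hposXY : ∀ x ∈ X, ∀ y ∈ Y, pos x ≤ pos y + 2 * k := by
    intro x hx y hy
    have h1 := hdeg_lb x
    have h2 := hdeg_ub y
    have h3 := hdegXY x hx y hy
    omega
  set S : Set (V × V) := {p : V × V | p.1 ∈ X ∧ p.2 ∈ Y ∧ E p.1 p.2} with hSdef
  have hS : 100 * k ^ 2 + 22 * k + 2 ≤ S.ncard := hcard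
  have hSne : S.Nonempty := by
    apply Set.nonempty_of_ncard_ne_zero
    omega
  obtain ⟨p0, hp0⟩ := hSne
  obtain ⟨y0, hy0Y, hy0min⟩ := Set.exists_min_image Y pos (Set.toFinite Y) ⟨p0.2, hp0.2.1⟩
  set j : ℕ := pos y0 with hjdef
  have hjn : j < n := hposlt y0
  set A : Set (V × V) := {p : V × V | pos p.1 < j ∧ ¬ (pos p.2 < j) ∧ E p.1 p.2} with hAdef
  set c : ℕ := min (j + 2 * k + 1) n with hcdef
  set C : Set (V × V) := {p : V × V | pos p.1 < c ∧ ¬ (pos p.2 < c) ∧ E p.1 p.2} with hCdef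
  set W : Set V := {v | j ≤ pos v ∧ pos v ≤ j + 2 * k} with hWdef
  have hSsub : S ⊆ (A ∪ C) ∪ W ×ˢ W := by
    rintro ⟨x, y⟩ ⟨hx, hy, hE⟩
    have hxle : pos x ≤ j + 2 * k := hposXY x hx y0 hy0Y
    have hyge : j ≤ pos y := hy0min y hy
    by_cases h1 : pos x < j
    · exact Or.inl (Or.inl (show pos x < j ∧ ¬ (pos y < j) ∧ E x y from
        ⟨h1, by omega, hE⟩))
    · push_neg at h1
      by_cases h2 : pos y ≤ j + 2 * k
      · exact Or.inr (show (j ≤ pos x ∧ pos x ≤ j + 2 * k) ∧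
          (j ≤ pos y ∧ pos y ≤ j + 2 * k) from ⟨⟨h1, hxle⟩, ⟨hyge, h2⟩⟩)
      · push_neg at h2
        have hyn : pos y < n := hposlt y
        have hxn : pos x < n := hposlt x
        refine Or.inl (Or.inr (show pos x < c ∧ ¬ (pos y < c) ∧ E x y from
          ⟨?_, ?_, hE⟩))
        · rw [hcdef]
          exact lt_min (by omega) hxn
        · intro hcon
          rw [hcdef] at hcon
          have := lt_of_lt_of_le hcon (min_le_left _ _)
          omega
  have hWcard : W.ncard ≤ 2 * k + 1 := by
    have h1 : W.ncard ≤ ((Finset.Icc j (j + 2 * k) : Finset ℕ) : Set ℕ).ncard := by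
      apply Set.ncard_le_ncard_of_injOn pos
      · intro a ha
        simp only [Finset.coe_Icc, Set.mem_Icc]
        exact ⟨ha.1, ha.2⟩
      · intro a _ b _ h
        exact hposinj h
    rw [Set.ncard_coe_finset, Nat.card_Icc] at h1
    omega
  have hScard : S.ncard ≤ k + k + (2 * k + 1) * (2 * k + 1) := by
    calc S.ncard ≤ ((A ∪ C) ∪ W ×ˢ W).ncard := Set.ncard_le_ncard hSsub (Set.toFinite _)
      _ ≤ (A ∪ C).ncard + (W ×ˢ W).ncard := Set.ncard_union_le _ _
      _ ≤ (A.ncard + C.ncard) + (W ×ˢ W).ncard :=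
          Nat.add_le_add (Set.ncard_union_le _ _) le_rfl
      _ ≤ (k + k) + (W ×ˢ W).ncard := by
          refine Nat.add_le_add (Nat.add_le_add ?_ ?_) le_rfl
          · exact hcut j (le_of_lt hjn)
          · exact hcut c (min_le_right _ _)
      _ ≤ (k + k) + (2 * k + 1) * (2 * k + 1) := by
          refine Nat.add_le_add le_rfl ?_
          rw [stmt10_ncard_prod]
          exact Nat.mul_le_mul hWcard hWcard
  nlinarith [hS, hScard]

private lemma stmt10_key {V : Type*} [Fintype V] (E : V → V → Prop) (hT : SemiComplete E)
    (k : ℕ) (X Y : Set V)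
    (hXY : BackwardTangle E ((100 * k ^ 2 + 22 * k + 1) + 1) X Y)
    (e : Fin (Fintype.card V) ≃ V) : k < orderWidth E e := by
  by_contra hlt
  push_neg at hlt
  unfold orderWidth at hlt
  refine stmt10_main E hT k X Y hXY (Fintype.card V)
    (fun v => ((e.symm v : Fin (Fintype.card V)) : ℕ)) (fun v => (e.symm v).2)
    (fun a b h => e.symm.injective (Fin.ext h)) ?_ ?_
  · intro i hi
    exact ⟨e ⟨i, hi⟩, by simp⟩
  · intro m hm
    have h := le_ciSup (Set.Finite.bddAbove (Set.finite_range
      (fun α : Fin (Fintype.card V + 1) =>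
        {p : V × V | ((e.symm p.1 : ℕ) < (α : ℕ)) ∧ ¬ ((e.symm p.2 : ℕ) < (α : ℕ)) ∧
          E p.1 p.2}.ncard))) (⟨m, by omega⟩ : Fin (Fintype.card V + 1))
    exact le_trans h hlt

/-- A semi-complete digraph containing an `(m+1)`-backward tangle, where
`m = 100k² + 22k + 1`, has cutwidth greater than `k`. -/
theorem stmt_10 {V : Type*} [Fintype V] (E : V → V → Prop) (hT : SemiComplete E)
    (k : ℕ) (X Y : Set V)
    (hXY : BackwardTangle E ((100 * k ^ 2 + 22 * k + 1) + 1) X Y) :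
    k < cutwidth E := by
  have hne : Nonempty (Fin (Fintype.card V) ≃ V) := ⟨(Fintype.equivFin V).symm⟩
  obtain ⟨e, he⟩ := Set.mem_range.mp
    (Nat.sInf_mem (Set.range_nonempty (fun e : Fin (Fintype.card V) ≃ V => orderWidth E e)))
  have hcw : cutwidth E = orderWidth E e := by
    rw [cutwidth, ← sInf_range, he]
  rw [hcw]
  exact stmt10_key E hT k X Y hXY e
end
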